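/- arXiv:2504.00301 — 3 statements merged into one kernel-verified Lean document; each statement's English description precedes it below -/
import Mathlib

section
/- Let G be a DC graph on {1,...,N} and let (a,p) ∈ P^{2N}. Then (a,p) ∈ P_G if and only if (G,a,p) satisfies both conditions (C_{m(G)}^>) and (C_{M(G)}^≤), i.e., z_1^G(a,p) > Z^G_{i,j}(a,p) for every (i,j) ∈ m(G) and z_1^G(a,p) ≤ Z^G_{i,j}(a,p) for every (i,j) ∈ M(G). -/
open Filter Topology
open scoped Classical

noncomputable section

/-- The positive part `x₊ = max x 0` of a real number. -/
def pos' (x : ℝ) : ℝ := max x 0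

/-- `qq p i = p 1 + ... + p i` (so `qq p 0 = 0`). -/
def qq (p : ℕ → ℝ) (i : ℕ) : ℝ := ∑ j ∈ Finset.Icc 1 i, p j

/-- `dpar a i = a i - a (i-1)`, with the convention `a 0 = 0`. -/
def dpar (a : ℕ → ℝ) (i : ℕ) : ℝ := if i = 1 then a 1 else a i - a (i - 1)

/-- `(a, p)` is a parameter tuple in `P^{2N}`:
`0 < a 1 < a 2 < ... < a N` and `p 1, ..., p N > 0`. -/
def IsParam (N : ℕ) (a p : ℕ → ℝ) : Prop :=
  0 < a 1 ∧ (∀ i, 1 ≤ i → i < N → a i < a (i + 1)) ∧ (∀ i, 1 ≤ i → i ≤ N → 0 < p i)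

/-- `s` is a stationary tuple for the parameters `(a, p)`:
`0 < s 1 < ... < s N` and `a i = ∑_{j=1}^N p j * (s i - s j + s 1)₊` for `1 ≤ i ≤ N`. -/
def IsStationaryTuple (N : ℕ) (a p s : ℕ → ℝ) : Prop :=
  0 < s 1 ∧ (∀ i, 1 ≤ i → i < N → s i < s (i + 1)) ∧
  ∀ i, 1 ≤ i → i ≤ N → a i = ∑ j ∈ Finset.Icc 1 N, p j * pos' (s i - s j + s 1)

/-- The inverse of (the restriction to `[0, ∞)` of) a function `y : ℝ → ℝ`. -/
def tinv (y : ℝ → ℝ) (x : ℝ) : ℝ := Function.invFunOn y (Set.Ici 0) x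

/-- The right derivative of `y` at `t` (the derivative of `y` at `t` within `[t, ∞)`). -/
def rD (y : ℝ → ℝ) (t : ℝ) : ℝ := derivWithin y (Set.Ici t) t

/-- The sequence `(y k)` satisfies recurrence (R).  The condition on the initial function `y 0`
(continuous, piecewise linear with at most `N` points of non-differentiability, vanishing at `0`,
with non-decreasing right derivative taking values in `{q 1, ..., q N}`) is encoded through its
canonical representation: such functions are exactly those of the form
`t ↦ ∑_{j=1}^N p j * (t - c j)₊` with `c` non-negative, non-decreasing and `c 1 = 0`. -/
def SatisfiesR (N : ℕ) (a p : ℕ → ℝ) (y : ℕ → ℝ → ℝ) : Prop :=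
  (∃ c : ℕ → ℝ, c 1 = 0 ∧ (∀ j, 1 ≤ j → j ≤ N → 0 ≤ c j) ∧
      (∀ j, 1 ≤ j → j < N → c j ≤ c (j + 1)) ∧
      ∀ t : ℝ, 0 ≤ t → y 0 t = ∑ j ∈ Finset.Icc 1 N, p j * pos' (t - c j)) ∧
  ∀ k : ℕ, ∀ t : ℝ, 0 ≤ t →
    y (k + 1) t = ∑ j ∈ Finset.Icc 1 N, p j * pos' (t - tinv (y k) (a j) + tinv (y k) (a 1))

/-- The breakpoints `c j` of the lower bounding trajectory `y₀⁻`: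
`c 1 = 0` and `c j = d 1 / q 1 + ∑_{l=2}^j d l / q (l-1)` for `j ≥ 2`. -/
def cminus (a p : ℕ → ℝ) (j : ℕ) : ℝ :=
  if j ≤ 1 then 0
  else a 1 / qq p 1 + ∑ l ∈ Finset.Icc 2 j, (a l - a (l - 1)) / qq p (l - 1)

/-- The lower bounding initial trajectory `y₀⁻`. -/
def yminus0 (N : ℕ) (a p : ℕ → ℝ) : ℝ → ℝ :=
  fun t => ∑ j ∈ Finset.Icc 1 N, p j * pos' (t - cminus a p j)

/-- The upper bounding initial trajectory `y₀⁺ : t ↦ q N * t`. -/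
def yplus0 (N : ℕ) (p : ℕ → ℝ) : ℝ → ℝ := fun t => qq p N * t

/-- The sequence satisfying recurrence (R) with prescribed initial term `y0`. -/
def iterR (N : ℕ) (a p : ℕ → ℝ) (y0 : ℝ → ℝ) : ℕ → ℝ → ℝ
  | 0 => y0
  | k + 1 => fun t =>
      ∑ j ∈ Finset.Icc 1 N,
        p j * pos' (t - tinv (iterR N a p y0 k) (a j) + tinv (iterR N a p y0 k) (a 1))

/-- `y` is a stationary trajectory: an increasing bijection of `[0,∞)` satisfying the
fixed-point equation of recurrence (R). -/
def IsStatTraj (N : ℕ) (a p : ℕ → ℝ) (y : ℝ → ℝ) : Prop :=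
  StrictMonoOn y (Set.Ici 0) ∧ Set.BijOn y (Set.Ici 0) (Set.Ici 0) ∧
  ∀ t : ℝ, 0 ≤ t → y t = ∑ j ∈ Finset.Icc 1 N, p j * pos' (t - tinv y (a j) + tinv y (a 1))

/-- `E_N`: the set of pairs `(i, j)` with `1 ≤ i < j ≤ N`. -/
def ENfin (N : ℕ) : Finset (ℕ × ℕ) :=
  (Finset.Icc 1 N ×ˢ Finset.Icc 1 N).filter fun e => e.1 < e.2

/-- `Nested e e'` means `e ≼_E e'`, i.e. `e` is nested in `e'`. -/
def Nested (e e' : ℕ × ℕ) : Prop := e'.1 ≤ e.1 ∧ e.1 < e.2 ∧ e.2 ≤ e'.2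

/-- `E` is the edge set of a downward closed graph on `{1, ..., N}`. -/
def IsDCGraph (N : ℕ) (E : Finset (ℕ × ℕ)) : Prop :=
  E ⊆ ENfin N ∧ ∀ e ∈ E, ∀ e' : ℕ × ℕ, Nested e' e → e' ∈ E

/-- `bG E i` is the greatest `j > i` with `(i, j) ∈ E`, and `i` if there is no such `j`;
by convention `bG E 0 = 1`. -/
def bG (E : Finset (ℕ × ℕ)) (i : ℕ) : ℕ :=
  if i = 0 then 1 else max i ((E.filter fun e => e.1 = i).sup fun e => e.2)

/-- `m(G)`: the maximal elements of `E` for `≼_E`. -/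
def maxE (E : Finset (ℕ × ℕ)) : Finset (ℕ × ℕ) :=
  E.filter fun e => ∀ e' ∈ E, Nested e e' → e' = e

/-- `M(G)`: the minimal elements of `E_N \ E` for `≼_E`. -/
def minNE (N : ℕ) (E : Finset (ℕ × ℕ)) : Finset (ℕ × ℕ) :=
  (ENfin N \ E).filter fun e => ∀ e' ∈ ENfin N \ E, Nested e' e → e' = e

/-- The map `T(G) : ℝ^N → ℝ^N`. -/
def TG (a p : ℕ → ℝ) (E : Finset (ℕ × ℕ)) (s : ℕ → ℝ) (i : ℕ) : ℝ :=
  (1 / qq p (bG E i)) * (a i + ∑ j ∈ Finset.Icc 1 (bG E i), p j * (s j - s 1))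

/-- The product of `γ` over the consecutive pairs (edges) of a list of vertices. -/
def pathProd (γ : ℕ → ℕ → ℝ) (l : List ℕ) : ℝ := (List.zipWith γ l l.tail).prod

/-- `Γ i j`: the sum, over all directed paths from `i` to `j` using edges of `E`, of the
product of `γ` over the edges of the path.  Since all edges of a DC graph increase, a directed
path from `i` to `j` is identified with the set `S ⊆ (i, j)` of its intermediate vertices,
subject to consecutive vertices being joined by edges of `E`. -/
def GammaPath (E : Finset (ℕ × ℕ)) (γ : ℕ → ℕ → ℝ) (i j : ℕ) : ℝ :=
  if i = j then 1
  else if i < j then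
    ∑ S ∈ (Finset.Ioo i j).powerset,
      if List.Chain' (fun u v => (u, v) ∈ E) (Finset.sort (insert i (insert j S)) (· ≤ ·))
      then pathProd γ (Finset.sort (insert i (insert j S)) (· ≤ ·)) else 0
  else 0

/-- The edge weight `γ^G_{i,j}`. -/
def gammaG (p : ℕ → ℝ) (E : Finset (ℕ × ℕ)) (i j : ℕ) : ℝ :=
  (qq p (bG E i) - qq p (max (j - 1) (bG E (i - 1)))) / qq p (bG E (i - 1))

/-- `Γ^G_{i,j}`. -/
def GammaG (p : ℕ → ℝ) (E : Finset (ℕ × ℕ)) (i j : ℕ) : ℝ := GammaPath E (gammaG p E) i j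

/-- `z_1^G (a, p)`. -/
def z1G (N : ℕ) (a p : ℕ → ℝ) (E : Finset (ℕ × ℕ)) : ℝ :=
  (∑ j ∈ Finset.Icc 1 N, GammaG p E 1 j * dpar a j / qq p (bG E (j - 1))) /
  (1 + ∑ j ∈ Finset.Icc 1 N,
      GammaG p E 1 j * (qq p (bG E j) - qq p (bG E (j - 1))) / qq p (bG E (j - 1)))

/-- `z_i^G (a, p)`. -/
def zG (N : ℕ) (a p : ℕ → ℝ) (E : Finset (ℕ × ℕ)) (i : ℕ) : ℝ :=
  if i = 1 then z1G N a p E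
  else
    (∑ j ∈ Finset.Icc i N, GammaG p E i j * dpar a j / qq p (bG E (j - 1))) -
      z1G N a p E *
        ∑ j ∈ Finset.Icc i N,
          GammaG p E i j * (qq p (bG E j) - qq p (bG E (j - 1))) / qq p (bG E (j - 1))

/-- `Z^G_{i,j} (a, p) = z_{i+1}^G + ... + z_j^G`. -/
def ZG (N : ℕ) (a p : ℕ → ℝ) (E : Finset (ℕ × ℕ)) (i j : ℕ) : ℝ :=
  ∑ l ∈ Finset.Icc (i + 1) j, zG N a p E l

/-- The DC graph `Gr(a, p)` read off from the stationary tuple `s = s(a, p)`: its edges are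
the pairs `(i, j) ∈ E_N` with `s 1 > s j - s i`. -/
def GrEdges (N : ℕ) (s : ℕ → ℝ) : Finset (ℕ × ℕ) :=
  (ENfin N).filter fun e => s e.2 - s e.1 < s 1

/-- `ζ` solves the linear system `S^G (a, p)`. -/
def SolvesS (N : ℕ) (a p : ℕ → ℝ) (E : Finset (ℕ × ℕ)) (ζ : ℕ → ℝ) : Prop :=
  ∀ i, 1 ≤ i → i ≤ N →
    a i = ∑ j ∈ Finset.Icc 1 (bG E i),
      p j * ((∑ l ∈ Finset.Icc 1 i, ζ l) - (∑ l ∈ Finset.Icc 1 j, ζ l) + ζ 1)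

/-- `P^{2N}`, viewed as a (cylinder) subset of the space of pairs of real sequences; only the
coordinates `a 1, ..., a N, p 1, ..., p N` are constrained. -/
def Pset (N : ℕ) : Set ((ℕ → ℝ) × (ℕ → ℝ)) := {ap | IsParam N ap.1 ap.2}

/-- The region `P_G = {(a, p) ∈ P^{2N} : Gr(a, p) = G}`. -/
def PGset (N : ℕ) (E : Finset (ℕ × ℕ)) : Set ((ℕ → ℝ) × (ℕ → ℝ)) :=
  {ap | IsParam N ap.1 ap.2 ∧ ∃ s : ℕ → ℝ, IsStationaryTuple N ap.1 ap.2 s ∧ GrEdges N s = E}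

/-- The boundary of `P_G` relative to `P^{2N}`.  Since `P^{2N}` is open, the closure of `P_G`
relative to `P^{2N}` is `closure (PGset N E) ∩ Pset N` and its relative interior is
`interior (PGset N E)`. -/
def relBoundary (N : ℕ) (E : Finset (ℕ × ℕ)) : Set ((ℕ → ℝ) × (ℕ → ℝ)) :=
  (closure (PGset N E) ∩ Pset N) \ interior (PGset N E)

/-- The trajectory `y^{(m)}` built from a tuple `s`:
`t ↦ ∑_{j=1}^N p j * (t - s j + s 1)₊`. -/
def trajOfS (N : ℕ) (p s : ℕ → ℝ) : ℝ → ℝ :=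
  fun t => ∑ j ∈ Finset.Icc 1 N, p j * pos' (t - s j + s 1)

/-- The DC graph `G^{(m)}` associated with a tuple `s`: its edges are the `(i, j) ∈ E_N` with
`t^{(m)} (a i) - s j + s 1 > 0`, where `t^{(m)}` is the inverse of `trajOfS N p s`. -/
def GrFromS (N : ℕ) (a p s : ℕ → ℝ) : Finset (ℕ × ℕ) :=
  (ENfin N).filter fun e => 0 < tinv (trajOfS N p s) (a e.1) - s e.2 + s 1

end

namespace S10
open Finset

lemma pos'_of_nonneg {x : ℝ} (h : 0 ≤ x) : pos' x = x := max_eq_left h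
lemma pos'_of_nonpos {x : ℝ} (h : x ≤ 0) : pos' x = 0 := max_eq_right h
lemma pos'_mono {x y : ℝ} (h : x ≤ y) : pos' x ≤ pos' y := max_le_max h le_rfl

lemma Icc_one_eq_Ioc (v : ℕ) : Finset.Icc 1 v = Finset.Ioc 0 v := by
  rw [← Finset.Icc_add_one_left_eq_Ioc, zero_add]

lemma qq_diff (p : ℕ → ℝ) {u v : ℕ} (h : u ≤ v) :
    qq p v - qq p u = ∑ j ∈ Finset.Icc (u+1) v, p j := by
  have h2 : ∑ j ∈ Finset.Ioc 0 u, p j + ∑ j ∈ Finset.Ioc u v, p j = ∑ j ∈ Finset.Ioc 0 v, p j :=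
    Finset.sum_Ioc_consecutive _ (Nat.zero_le u) h
  rw [show Finset.Ioc u v = Finset.Icc (u+1) v from (Finset.Icc_add_one_left_eq_Ioc u v).symm] at h2
  simp only [qq, Icc_one_eq_Ioc]
  linarith

section Param
variable {N : ℕ} {a p : ℕ → ℝ}

lemma qq_pos (hap : IsParam N a p) {i : ℕ} (h1 : 1 ≤ i) (h2 : i ≤ N) : 0 < qq p i := by
  have : ∀ j ∈ Finset.Icc 1 i, 0 < p j := by
    intro j hj
    rw [Finset.mem_Icc] at hj
    exact hap.2.2 j hj.1 (le_trans hj.2 h2)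
  exact Finset.sum_pos this ⟨1, Finset.mem_Icc.2 ⟨le_rfl, h1⟩⟩

lemma qq_mono (hap : IsParam N a p) {u v : ℕ} (h : u ≤ v) (hv : v ≤ N) :
    qq p u ≤ qq p v := by
  have hd := qq_diff p h
  have : 0 ≤ ∑ j ∈ Finset.Icc (u+1) v, p j := by
    apply Finset.sum_nonneg
    intro j hj
    rw [Finset.mem_Icc] at hj
    exact le_of_lt (hap.2.2 j (le_trans (Nat.le_add_left 1 u) hj.1) (le_trans hj.2 hv))
  linarith

/-- monotonicity from successive comparisons -/
lemma mono_succ {f : ℕ → ℝ} (h : ∀ i, 1 ≤ i → i < N → f i < f (i + 1)) :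
    ∀ i j, 1 ≤ i → i ≤ j → j ≤ N → f i ≤ f j := by
  intro i j hi hij hjN
  induction j, hij using Nat.le_induction with
  | base => exact le_rfl
  | succ n hn ih =>
    have hnN : n ≤ N := le_trans (Nat.le_succ n) hjN
    have := h n (le_trans hi hn) (by omega)
    have := ih (by omega)
    linarith

lemma strict_mono_succ {f : ℕ → ℝ} (h : ∀ i, 1 ≤ i → i < N → f i < f (i + 1)) :
    ∀ i j, 1 ≤ i → i < j → j ≤ N → f i < f j := by
  intro i j hi hij hjN
  have h1 : f i ≤ f (j - 1) := mono_succ h i (j - 1) hi (by omega) (by omega)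
  have h2 : f (j - 1) < f (j - 1 + 1) := h (j - 1) (by omega) (by omega)
  have : j - 1 + 1 = j := by omega
  rw [this] at h2
  linarith

lemma a_pos (hap : IsParam N a p) {i : ℕ} (h1 : 1 ≤ i) (h2 : i ≤ N) : 0 < a i :=
  lt_of_lt_of_le hap.1 (mono_succ hap.2.1 1 i le_rfl h1 h2)

lemma dpar_pos (hap : IsParam N a p) {i : ℕ} (h1 : 1 ≤ i) (h2 : i ≤ N) : 0 < dpar a i := by
  unfold dpar
  split
  · exact hap.1
  · have : 1 ≤ i - 1 := by omega
    have h3 : a (i - 1) < a i := by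
      have := strict_mono_succ hap.2.1 (i-1) i this (by omega) h2
      exact this
    linarith
end Param

section Graph
variable {N : ℕ} {E : Finset (ℕ × ℕ)}

lemma mem_ENfin {e : ℕ × ℕ} : e ∈ ENfin N ↔ 1 ≤ e.1 ∧ e.1 < e.2 ∧ e.2 ≤ N := by
  unfold ENfin
  simp only [Finset.mem_filter, Finset.mem_product, Finset.mem_Icc]
  constructor
  · rintro ⟨⟨⟨h1, h2⟩, h3, h4⟩, h5⟩; exact ⟨h1, h5, h4⟩
  · rintro ⟨h1, h2, h3⟩
    exact ⟨⟨⟨h1, by omega⟩, by omega, h3⟩, h2⟩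

lemma bG_zero : bG E 0 = 1 := by unfold bG; rw [if_pos rfl]

lemma bG_ge (i : ℕ) (hi : 1 ≤ i) : i ≤ bG E i := by
  unfold bG
  rw [if_neg (by omega)]
  exact le_max_left _ _

lemma bG_pos (i : ℕ) : 1 ≤ bG E i := by
  rcases Nat.eq_zero_or_pos i with h | h
  · subst h; rw [bG_zero]
  · exact le_trans h (bG_ge i h)

lemma bG_le (hE : IsDCGraph N E) {i : ℕ} (h1 : 1 ≤ i) (h2 : i ≤ N) : bG E i ≤ N := by
  unfold bG
  rw [if_neg (by omega)]
  apply max_le h2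
  apply Finset.sup_le
  intro e he
  rw [Finset.mem_filter] at he
  exact (mem_ENfin.1 (hE.1 he.1)).2.2

lemma bG_le' (hE : IsDCGraph N E) (hN : 1 ≤ N) {i : ℕ} (h2 : i ≤ N) : bG E i ≤ N := by
  rcases Nat.eq_zero_or_pos i with h | h
  · subst h; rw [bG_zero]; exact hN
  · exact bG_le hE h h2

lemma edge_le_bG (hE : IsDCGraph N E) {e : ℕ × ℕ} (he : e ∈ E) : e.2 ≤ bG E e.1 := by
  have hm := mem_ENfin.1 (hE.1 he)
  unfold bG
  rw [if_neg (by omega)]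
  refine le_trans ?_ (le_max_right _ _)
  apply Finset.le_sup (f := fun e' : ℕ × ℕ => e'.2)
  exact Finset.mem_filter.2 ⟨he, rfl⟩

lemma bG_edge (hE : IsDCGraph N E) {i j : ℕ} (h1 : 1 ≤ i) (hij : i < j) (hjb : j ≤ bG E i) :
    (i, j) ∈ E := by
  classical
  set F := E.filter (fun e' => e'.1 = i) with hF
  have hsup : j ≤ F.sup (fun e' => e'.2) := by
    unfold bG at hjb
    rw [if_neg (by omega)] at hjb
    rcases le_max_iff.1 hjb with h | h
    · omega
    · exact h
  have hne : F.Nonempty := by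
    rw [Finset.nonempty_iff_ne_empty]
    intro hemp
    rw [hemp, Finset.sup_empty] at hsup
    simp at hsup
    omega
  obtain ⟨e, heF, hesup⟩ := Finset.exists_mem_eq_sup F hne (fun e' => e'.2)
  rw [Finset.mem_filter] at heF
  refine hE.2 e heF.1 (i, j) ?_
  refine ⟨by rw [heF.2], hij, ?_⟩
  rw [← heF.2]
  omega

/-- characterization of edges -/
lemma edge_iff (hE : IsDCGraph N E) {i j : ℕ} :
    (i, j) ∈ E ↔ 1 ≤ i ∧ i < j ∧ j ≤ bG E i := by
  constructor
  · intro he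
    have hm := mem_ENfin.1 (hE.1 he)
    exact ⟨hm.1, hm.2.1, edge_le_bG hE he⟩
  · rintro ⟨h1, h2, h3⟩
    exact bG_edge hE h1 h2 h3

lemma bG_mono_succ (hE : IsDCGraph N E) {i : ℕ} (h1 : 1 ≤ i) :
    bG E (i - 1) ≤ bG E i := by
  rcases Nat.lt_or_ge (i - 1) 1 with h | h
  · have : i - 1 = 0 := by omega
    rw [this, bG_zero]
    exact bG_pos i
  · -- i - 1 ≥ 1
    rcases Nat.lt_or_ge (i - 1) (bG E (i - 1)) with hlt | hge
    · -- bG (i-1) > i-1, so (i-1, bG (i-1)) ∈ E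
      have hedge : (i - 1, bG E (i - 1)) ∈ E := bG_edge hE h hlt le_rfl
      rcases Nat.lt_or_ge i (bG E (i - 1)) with hlt2 | hge2
      · -- (i, bG (i-1)) ∈ E by downward closedness
        have : (i, bG E (i - 1)) ∈ E := hE.2 _ hedge (i, bG E (i-1)) ⟨by omega, hlt2, le_rfl⟩
        exact edge_le_bG hE this
      · exact le_trans hge2 (bG_ge i h1)
    · have : bG E (i - 1) = i - 1 := le_antisymm hge (bG_ge _ h)
      rw [this]
      exact le_trans (by omega) (bG_ge i h1)

lemma bG_mono_succ' (hE : IsDCGraph N E) {i : ℕ} : bG E i ≤ bG E (i + 1) := by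
  have := bG_mono_succ hE (i := i + 1) (by omega)
  simpa using this

/-- every edge is nested in a maximal edge -/
lemma maxE_cover (hE : IsDCGraph N E) {e : ℕ × ℕ} (he : e ∈ E) :
    ∃ f ∈ maxE E, Nested e f := by
  classical
  set F := E.filter (fun e' => Nested e e') with hF
  have hne : F.Nonempty :=
    ⟨e, Finset.mem_filter.2 ⟨he, le_rfl, (mem_ENfin.1 (hE.1 he)).2.1, le_rfl⟩⟩
  obtain ⟨f, hfF, hmax⟩ := F.exists_max_image (fun e' => e'.2 - e'.1) hne
  rw [Finset.mem_filter] at hfF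
  refine ⟨f, ?_, hfF.2⟩
  unfold maxE
  rw [Finset.mem_filter]
  refine ⟨hfF.1, ?_⟩
  intro e'' he'' hnest
  obtain ⟨hn1, hn2, hn3⟩ := hnest
  have he''F : e'' ∈ F := Finset.mem_filter.2 ⟨he'',
    le_trans hn1 hfF.2.1, hfF.2.2.1, le_trans hfF.2.2.2 hn3⟩
  have := hmax e'' he''F
  have h1 : e''.1 = f.1 := by omega
  have h2 : e''.2 = f.2 := by omega
  exact Prod.ext h1 h2

/-- every non-edge contains a minimal non-edge -/
lemma minNE_cover {e : ℕ × ℕ} (he : e ∈ ENfin N \ E) :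
    ∃ f ∈ minNE N E, Nested f e := by
  classical
  set F := (ENfin N \ E).filter (fun e' => Nested e' e) with hF
  have hme := mem_ENfin.1 (Finset.mem_sdiff.1 he).1
  have hne : F.Nonempty :=
    ⟨e, Finset.mem_filter.2 ⟨he, le_rfl, hme.2.1, le_rfl⟩⟩
  obtain ⟨f, hfF, hmin⟩ := F.exists_min_image (fun e' => e'.2 - e'.1) hne
  rw [Finset.mem_filter] at hfF
  refine ⟨f, ?_, hfF.2⟩
  unfold minNE
  rw [Finset.mem_filter]
  refine ⟨hfF.1, ?_⟩
  intro e'' he'' hnest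
  obtain ⟨hn1, hn2, hn3⟩ := hnest
  have he''F : e'' ∈ F := Finset.mem_filter.2 ⟨he'',
    le_trans hfF.2.1 hn1, hn2, le_trans hn3 hfF.2.2.2⟩
  have := hmin e'' he''F
  have hf12 : f.1 < f.2 := (mem_ENfin.1 (Finset.mem_sdiff.1 hfF.1).1).2.1
  have h1 : e''.1 = f.1 := by omega
  have h2 : e''.2 = f.2 := by omega
  exact Prod.ext h1 h2

end Graph

section Swap

/-- generic triangular sum swap -/
lemma sum_swap_tri (f : ℕ → ℕ → ℝ) (c n : ℕ) :
    ∑ j ∈ Finset.Icc c n, ∑ k ∈ Finset.Icc c j, f k j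
      = ∑ k ∈ Finset.Icc c n, ∑ j ∈ Finset.Icc k n, f k j := by
  have h1 : ∀ j ∈ Finset.Icc c n, ∑ k ∈ Finset.Icc c j, f k j
      = ∑ k ∈ Finset.Icc c n, if k ≤ j then f k j else 0 := by
    intro j hj
    rw [Finset.mem_Icc] at hj
    rw [← Finset.sum_filter]
    apply Finset.sum_congr _ (fun _ _ => rfl)
    ext k
    simp only [Finset.mem_filter, Finset.mem_Icc]
    omega
  rw [Finset.sum_congr rfl h1, Finset.sum_comm]
  apply Finset.sum_congr rfl
  intro k hk
  rw [Finset.mem_Icc] at hk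
  rw [← Finset.sum_filter]
  apply Finset.sum_congr _ (fun _ _ => rfl)
  ext j
  simp only [Finset.mem_filter, Finset.mem_Icc]
  omega

/-- swap lemma for the weighted sums appearing in the linear system -/
lemma sum_swap_S (p z : ℕ → ℝ) (c m n : ℕ) (hmn : m ≤ n) :
    ∑ j ∈ Finset.Icc (m+1) n, p j * ∑ k ∈ Finset.Icc (c+1) j, z k
      = ∑ k ∈ Finset.Icc (c+1) n, (qq p n - qq p (max (k-1) m)) * z k := by
  have h1 : ∀ j ∈ Finset.Icc (m+1) n, p j * ∑ k ∈ Finset.Icc (c+1) j, z k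
      = ∑ k ∈ Finset.Icc (c+1) n, if k ≤ j then p j * z k else 0 := by
    intro j hj
    rw [Finset.mem_Icc] at hj
    rw [← Finset.sum_filter, Finset.mul_sum]
    apply Finset.sum_congr _ (fun _ _ => rfl)
    ext k
    simp only [Finset.mem_filter, Finset.mem_Icc]
    omega
  rw [Finset.sum_congr rfl h1, Finset.sum_comm]
  apply Finset.sum_congr rfl
  intro k hk
  rw [Finset.mem_Icc] at hk
  have h2 : ∑ j ∈ Finset.Icc (m+1) n, (if k ≤ j then p j * z k else 0)
      = ∑ j ∈ Finset.Icc (max (k-1) m + 1) n, p j * z k := by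
    rw [← Finset.sum_filter]
    apply Finset.sum_congr _ (fun _ _ => rfl)
    ext j
    simp only [Finset.mem_filter, Finset.mem_Icc]
    omega
  rw [h2, ← Finset.sum_mul, ← qq_diff p (by omega)]

end Swap

section Gamma
variable {E : Finset (ℕ × ℕ)} {γ : ℕ → ℕ → ℝ}

lemma pathProd_nil : pathProd γ [] = 1 := by simp [pathProd]
lemma pathProd_single (x : ℕ) : pathProd γ [x] = 1 := by simp [pathProd]
lemma pathProd_cons_cons (x y : ℕ) (t : List ℕ) :
    pathProd γ (x :: y :: t) = γ x y * pathProd γ (y :: t) := by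
  simp [pathProd]

lemma pathProd_nonneg {P : ℕ → ℕ → Prop} (hγ : ∀ u v, P u v → 0 ≤ γ u v) :
    ∀ l : List ℕ, List.Chain' P l → 0 ≤ pathProd γ l := by
  intro l
  induction l with
  | nil => intro _; rw [pathProd_nil]; norm_num
  | cons x t ih =>
    cases t with
    | nil => intro _; rw [pathProd_single]; norm_num
    | cons y t' =>
      intro hc
      simp only [List.Chain', List.isChain_cons_cons] at hc
      rw [pathProd_cons_cons]
      exact mul_nonneg (hγ _ _ hc.1) (ih hc.2)

lemma GammaPath_self (i : ℕ) : GammaPath E γ i i = 1 := by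
  unfold GammaPath; rw [if_pos rfl]

lemma GammaPath_nonneg (hγ : ∀ u v, (u, v) ∈ E → 0 ≤ γ u v) (i j : ℕ) :
    0 ≤ GammaPath E γ i j := by
  unfold GammaPath
  split
  · norm_num
  split
  · apply Finset.sum_nonneg
    intro S hS
    split
    · next hc => exact pathProd_nonneg (P := fun u v => (u, v) ∈ E) hγ _ hc
    · exact le_rfl
  · exact le_rfl

lemma sort_insert_of_lt {x : ℕ} {T : Finset ℕ} (h : ∀ y ∈ T, x < y) :
    Finset.sort (insert x T) (· ≤ ·) = x :: Finset.sort T (· ≤ ·) := by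
  apply Finset.sort_insert
  · intro b hb; exact le_of_lt (h b hb)
  · intro hx; exact lt_irrefl x (h x hx)

lemma insert_erase_self {a : ℕ} {s : Finset ℕ} : insert a (s.erase a) = insert a s := by
  ext y
  simp only [Finset.mem_insert, Finset.mem_erase]
  constructor
  · rintro (h | ⟨h1, h2⟩)
    · exact Or.inl h
    · exact Or.inr h2
  · rintro (h | h)
    · exact Or.inl h
    · by_cases hy : y = a
      · exact Or.inl hy
      · exact Or.inr ⟨hy, h⟩

/-- first-step decomposition of the path sum -/
lemma GammaPath_rec (E : Finset (ℕ × ℕ)) (γ : ℕ → ℕ → ℝ) {i j : ℕ} (hij : i < j) :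
    GammaPath E γ i j = ∑ k ∈ Finset.Icc (i+1) j,
      if (i, k) ∈ E then γ i k * GammaPath E γ k j else 0 := by
  classical
  have hR : ∀ k ∈ Finset.Icc (i+1) j,
      (if (i, k) ∈ E then γ i k * GammaPath E γ k j else 0)
      = ∑ S' ∈ (Finset.Ioo k j).powerset,
          (if (i, k) ∈ E then γ i k *
            (if k = j then 1 else
              (if List.Chain' (fun u v => (u, v) ∈ E)
                    (Finset.sort (insert k (insert j S')) (· ≤ ·))
               then pathProd γ (Finset.sort (insert k (insert j S')) (· ≤ ·)) else 0))
           else 0) := by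
    intro k hk
    rw [Finset.mem_Icc] at hk
    by_cases hkj : k = j
    · subst hkj
      simp [GammaPath_self]
    · have hkj' : k < j := by omega
      have hGP : GammaPath E γ k j = ∑ S' ∈ (Finset.Ioo k j).powerset,
          (if List.Chain' (fun u v => (u, v) ∈ E)
                (Finset.sort (insert k (insert j S')) (· ≤ ·))
           then pathProd γ (Finset.sort (insert k (insert j S')) (· ≤ ·)) else 0) := by
        unfold GammaPath
        rw [if_neg hkj, if_pos hkj']
      rw [hGP]
      by_cases hik : (i, k) ∈ E
      · rw [if_pos hik, Finset.mul_sum]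
        exact Finset.sum_congr rfl (fun S' _ => by rw [if_pos hik, if_neg hkj])
      · rw [if_neg hik]
        symm
        apply Finset.sum_eq_zero
        intro S' _
        rw [if_neg hik]
  rw [Finset.sum_congr rfl hR, Finset.sum_sigma']
  unfold GammaPath
  rw [if_neg (by omega : ¬ i = j), if_pos hij]
  refine (Finset.sum_nbij' (fun x => (insert x.1 x.2).erase j)
    (fun S => ⟨(insert j S).min' (Finset.insert_nonempty j S),
      S.erase ((insert j S).min' (Finset.insert_nonempty j S))⟩) ?_ ?_ ?_ ?_ ?_).symm
  · -- membership forward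
    rintro ⟨k, S'⟩ hx
    simp only [Finset.mem_sigma, Finset.mem_Icc, Finset.mem_powerset] at hx
    obtain ⟨⟨hk1, hk2⟩, hS'⟩ := hx
    simp only [Finset.mem_powerset]
    intro y hy
    rw [Finset.mem_erase] at hy
    obtain ⟨hyj, hy2⟩ := hy
    rcases Finset.mem_insert.1 hy2 with h | h
    · subst h
      rw [Finset.mem_Ioo]
      omega
    · have := Finset.mem_Ioo.1 (hS' h)
      rw [Finset.mem_Ioo]
      omega
  · -- membership backward
    intro S hS
    rw [Finset.mem_powerset] at hS
    simp only [Finset.mem_sigma, Finset.mem_Icc, Finset.mem_powerset]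
    set m := (insert j S).min' (Finset.insert_nonempty j S) with hm
    have hmmem : m ∈ insert j S := Finset.min'_mem _ _
    have hmle : ∀ y ∈ insert j S, m ≤ y := fun y hy => Finset.min'_le _ y hy
    have hmj : m ≤ j := hmle j (Finset.mem_insert_self j S)
    have him : i < m := by
      rcases Finset.mem_insert.1 hmmem with h | h
      · omega
      · exact (Finset.mem_Ioo.1 (hS h)).1
    refine ⟨⟨by omega, hmj⟩, ?_⟩
    intro y hy
    rw [Finset.mem_erase] at hy
    obtain ⟨hym, hyS⟩ := hy
    have h1 := hmle y (Finset.mem_insert_of_mem hyS)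
    have h2 := (Finset.mem_Ioo.1 (hS hyS)).2
    rw [Finset.mem_Ioo]
    omega
  · -- left inverse
    rintro ⟨k, S'⟩ hx
    simp only [Finset.mem_sigma, Finset.mem_Icc, Finset.mem_powerset] at hx
    obtain ⟨⟨hk1, hk2⟩, hS'⟩ := hx
    by_cases hkj : k = j
    · subst hkj
      have hS0 : S' = ∅ := by
        rw [Finset.Ioo_self] at hS'
        exact Finset.subset_empty.1 hS'
      subst hS0
      simp
    · have hjnot : j ∉ insert k S' := by
        rw [Finset.mem_insert]
        rintro (h | h)
        · exact hkj h.symm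
        · exact absurd (Finset.mem_Ioo.1 (hS' h)).2 (lt_irrefl j)
      have hknS : k ∉ S' := fun h => absurd (Finset.mem_Ioo.1 (hS' h)).1 (lt_irrefl k)
      have hE1 : (insert k S').erase j = insert k S' := Finset.erase_eq_of_notMem hjnot
      have hstep := congrArg (fun T : Finset ℕ =>
        (⟨(insert j T).min' (Finset.insert_nonempty j T),
          T.erase ((insert j T).min' (Finset.insert_nonempty j T))⟩ : (_ : ℕ) × Finset ℕ)) hE1
      refine hstep.trans ?_
      have hmk : (insert j (insert k S')).min' (Finset.insert_nonempty j _) = k := by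
        apply le_antisymm
        · exact Finset.min'_le _ k (by simp)
        · apply Finset.le_min'
          intro y hy
          rcases Finset.mem_insert.1 hy with h | h
          · omega
          · rcases Finset.mem_insert.1 h with h2 | h2
            · omega
            · exact le_of_lt (Finset.mem_Ioo.1 (hS' h2)).1
      rw [hmk, Finset.erase_insert hknS]
  · -- right inverse
    intro S hS
    rw [Finset.mem_powerset] at hS
    simp only
    set m := (insert j S).min' (Finset.insert_nonempty j S) with hm
    have hmmem : m ∈ insert j S := Finset.min'_mem _ _
    rcases Finset.eq_empty_or_nonempty S with hS0 | ⟨y0, hy0⟩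
    · subst hS0
      have hmj : m = j := by
        rcases Finset.mem_insert.1 hmmem with h | h
        · exact h
        · exact absurd h (Finset.notMem_empty _)
      rw [Finset.erase_empty, hmj, Finset.erase_insert_eq_erase, Finset.erase_empty]
    · have hmS : m ∈ S := by
        rcases Finset.mem_insert.1 hmmem with h | h
        · exfalso
          have h1 : m ≤ y0 := Finset.min'_le _ y0 (Finset.mem_insert_of_mem hy0)
          have h2 : y0 < j := (Finset.mem_Ioo.1 (hS hy0)).2
          omega
        · exact h
      have hjS : j ∉ S := fun h => absurd (Finset.mem_Ioo.1 (hS h)).2 (lt_irrefl j)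
      rw [insert_erase_self, Finset.insert_eq_self.2 hmS, Finset.erase_eq_of_notMem hjS]
  · -- values
    rintro ⟨k, S'⟩ hx
    simp only [Finset.mem_sigma, Finset.mem_Icc, Finset.mem_powerset] at hx
    obtain ⟨⟨hk1, hk2⟩, hS'⟩ := hx
    simp only
    by_cases hkj : k = j
    · have hS0 : S' = ∅ := by
        rw [hkj, Finset.Ioo_self] at hS'
        exact Finset.subset_empty.1 hS'
      subst hS0
      rw [hkj, Finset.erase_insert_eq_erase, Finset.erase_empty]
      have hsort : Finset.sort (insert i (insert j (∅ : Finset ℕ))) (· ≤ ·) = [i, j] := by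
        rw [sort_insert_of_lt (by intro y hy; simp at hy; omega)]
        simp [Finset.sort_singleton]
      rw [hsort]
      simp only [List.Chain', List.isChain_pair]
      rw [pathProd_cons_cons, pathProd_single]
      simp
    · have hkj' : k < j := by omega
      have hjnot : j ∉ insert k S' := by
        rw [Finset.mem_insert]
        rintro (h | h)
        · exact hkj h.symm
        · exact absurd (Finset.mem_Ioo.1 (hS' h)).2 (lt_irrefl j)
      rw [Finset.erase_eq_of_notMem hjnot]
      have hcomm : insert j (insert k S') = insert k (insert j S') := Finset.insert_comm j k S'
      have h2 : Finset.sort (insert k (insert j S')) (· ≤ ·)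
          = k :: Finset.sort (insert j S') (· ≤ ·) := by
        apply sort_insert_of_lt
        intro y hy
        rcases Finset.mem_insert.1 hy with h | h
        · omega
        · exact (Finset.mem_Ioo.1 (hS' h)).1
      have h1 : Finset.sort (insert i (insert j (insert k S'))) (· ≤ ·)
          = i :: Finset.sort (insert k (insert j S')) (· ≤ ·) := by
        rw [hcomm]
        apply sort_insert_of_lt
        intro y hy
        rcases Finset.mem_insert.1 hy with h | h
        · omega
        · rcases Finset.mem_insert.1 h with h3 | h3
          · omega
          · have := (Finset.mem_Ioo.1 (hS' h3)).1
            omega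
      rw [h1, h2, if_neg hkj]
      simp only [List.Chain', List.isChain_cons_cons, pathProd_cons_cons]
      by_cases hA : (i, k) ∈ E <;>
        by_cases hB : List.Chain' (fun u v => (u, v) ∈ E)
          (k :: Finset.sort (insert j S') (· ≤ ·)) <;>
        (simp only [List.Chain'] at hB; simp [hA, hB])

end Gamma

/-! ### the linear system -/

/-- partial sums of `ζ` -/
def Sz (ζ : ℕ → ℝ) (i : ℕ) : ℝ := ∑ l ∈ Finset.Icc 1 i, ζ l

/-- the `i`-th recursion identity -/
def RecP (N : ℕ) (a p : ℕ → ℝ) (E : Finset (ℕ × ℕ)) (ζ : ℕ → ℝ) (i : ℕ) : Prop :=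
  qq p (bG E (i-1)) * ζ i
    = dpar a i - ζ 1 * (qq p (bG E i) - qq p (bG E (i-1)))
      + ∑ k ∈ Finset.Icc (i+1) (bG E i),
          (qq p (bG E i) - qq p (max (k-1) (bG E (i-1)))) * ζ k

/-- the `i`-th equation of the system, with the convention `a 0 = 0` -/
def eqS (a p : ℕ → ℝ) (E : Finset (ℕ × ℕ)) (ζ : ℕ → ℝ) (i : ℕ) : Prop :=
  (if i = 0 then (0:ℝ) else a i)
    = ∑ j ∈ Finset.Icc 1 (bG E i), p j * (Sz ζ i - Sz ζ j + ζ 1)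

/-- the `u`-terms of the explicit solution, at `ζ 1 = t` -/
noncomputable def uu (a p : ℕ → ℝ) (E : Finset (ℕ × ℕ)) (t : ℝ) (i : ℕ) : ℝ :=
  dpar a i / qq p (bG E (i-1))
    - t * ((qq p (bG E i) - qq p (bG E (i-1))) / qq p (bG E (i-1)))

/-- the explicit solution formula, at `ζ 1 = t` -/
noncomputable def RR (N : ℕ) (a p : ℕ → ℝ) (E : Finset (ℕ × ℕ)) (t : ℝ) (i : ℕ) : ℝ :=
  ∑ j ∈ Finset.Icc i N, GammaG p E i j * uu a p E t j

section SumSplit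

lemma sum_split (f : ℕ → ℝ) {u v : ℕ} (h : u ≤ v) :
    ∑ j ∈ Finset.Icc 1 v, f j = ∑ j ∈ Finset.Icc 1 u, f j + ∑ j ∈ Finset.Icc (u+1) v, f j := by
  rw [Icc_one_eq_Ioc, Icc_one_eq_Ioc, Finset.Icc_add_one_left_eq_Ioc]
  exact (Finset.sum_Ioc_consecutive _ (Nat.zero_le u) h).symm

lemma sum_split' (f : ℕ → ℝ) {w u v : ℕ} (h1 : w ≤ u) (h2 : u ≤ v) :
    ∑ j ∈ Finset.Icc (w+1) v, f j
      = ∑ j ∈ Finset.Icc (w+1) u, f j + ∑ j ∈ Finset.Icc (u+1) v, f j := by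
  rw [Finset.Icc_add_one_left_eq_Ioc w v, Finset.Icc_add_one_left_eq_Ioc w u, Finset.Icc_add_one_left_eq_Ioc u v]
  exact (Finset.sum_Ioc_consecutive _ h1 h2).symm

lemma Sz_succ (ζ : ℕ → ℝ) {i : ℕ} (h : 1 ≤ i) : Sz ζ i = Sz ζ (i-1) + ζ i := by
  unfold Sz
  rw [sum_split ζ (show i - 1 ≤ i by omega)]
  congr 1
  rw [show i - 1 + 1 = i by omega, Finset.Icc_self, Finset.sum_singleton]

lemma Sz_diff (ζ : ℕ → ℝ) {i j : ℕ} (h : i ≤ j) :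
    Sz ζ j - Sz ζ i = ∑ k ∈ Finset.Icc (i+1) j, ζ k := by
  unfold Sz
  rw [sum_split ζ h]
  ring

end SumSplit

section System
variable {N : ℕ} {a p : ℕ → ℝ} {E : Finset (ℕ × ℕ)}

lemma gammaG_nonneg (hN : 1 ≤ N) (hap : IsParam N a p) (hE : IsDCGraph N E) :
    ∀ u v, (u, v) ∈ E → 0 ≤ gammaG p E u v := by
  intro u v huv
  have hm := mem_ENfin.1 (hE.1 huv)
  have hvb : v ≤ bG E u := edge_le_bG hE huv
  have hbu : bG E u ≤ N := bG_le hE hm.1 (by omega)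
  have hbu1 : bG E (u-1) ≤ bG E u := bG_mono_succ hE hm.1
  have hq1 : 0 < qq p (bG E (u-1)) := qq_pos hap (bG_pos _) (le_trans hbu1 hbu)
  have hnum : qq p (max (v-1) (bG E (u-1))) ≤ qq p (bG E u) :=
    qq_mono hap (by omega) hbu
  unfold gammaG
  apply div_nonneg (by linarith) (le_of_lt hq1)

lemma GammaG_nonneg (hN : 1 ≤ N) (hap : IsParam N a p) (hE : IsDCGraph N E) (i j : ℕ) :
    0 ≤ GammaG p E i j :=
  GammaPath_nonneg (fun u v h => gammaG_nonneg hN hap hE u v h) i j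

lemma GammaG_self (i : ℕ) : GammaG p E i i = 1 := GammaPath_self i

lemma GammaG_rec {i j : ℕ} (hij : i < j) :
    GammaG p E i j = ∑ k ∈ Finset.Icc (i+1) j,
      if (i, k) ∈ E then gammaG p E i k * GammaG p E k j else 0 :=
  GammaPath_rec E (gammaG p E) hij

lemma Icc_eq_insert {i n : ℕ} (h : i ≤ n) :
    Finset.Icc i n = insert i (Finset.Icc (i+1) n) := by
  ext x
  simp only [Finset.mem_Icc, Finset.mem_insert]
  omega

/-- the recursion satisfied by the explicit formula -/
lemma RREC (hN : 1 ≤ N) (hap : IsParam N a p) (hE : IsDCGraph N E) (t : ℝ) {i : ℕ}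
    (h1 : 1 ≤ i) (hiN : i ≤ N) :
    RR N a p E t i = uu a p E t i
      + ∑ k ∈ Finset.Icc (i+1) N,
          (if (i, k) ∈ E then gammaG p E i k * RR N a p E t k else 0) := by
  unfold RR
  rw [Icc_eq_insert hiN, Finset.sum_insert (by simp), GammaG_self, one_mul]
  congr 1
  have hstep : ∀ j ∈ Finset.Icc (i+1) N, GammaG p E i j * uu a p E t j
      = ∑ k ∈ Finset.Icc (i+1) j,
          (if (i, k) ∈ E then gammaG p E i k * GammaG p E k j else 0) * uu a p E t j := by
    intro j hj
    rw [Finset.mem_Icc] at hj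
    rw [GammaG_rec (show i < j by omega), Finset.sum_mul]
  rw [Finset.sum_congr rfl hstep, sum_swap_tri]
  apply Finset.sum_congr rfl
  intro k hk
  rw [Finset.mem_Icc] at hk
  by_cases hik : (i, k) ∈ E
  · rw [if_pos hik, Finset.mul_sum]
    apply Finset.sum_congr rfl
    intro j hj
    rw [if_pos hik]
    ring
  · rw [if_neg hik]
    apply Finset.sum_eq_zero
    intro j hj
    rw [if_neg hik, zero_mul]

lemma eqS_zero (ζ : ℕ → ℝ) : eqS a p E ζ 0 := by
  unfold eqS
  rw [if_pos rfl, bG_zero]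
  have h1 : Sz ζ 0 = 0 := by unfold Sz; simp
  have h2 : Sz ζ 1 = ζ 1 := by unfold Sz; simp
  rw [Finset.Icc_self, Finset.sum_singleton, h1, h2]
  ring

lemma solves_iff (ζ : ℕ → ℝ) :
    SolvesS N a p E ζ ↔ (∀ i, 1 ≤ i → i ≤ N → eqS a p E ζ i) := by
  unfold SolvesS eqS Sz
  constructor
  · intro h i h1 h2
    rw [if_neg (by omega)]
    exact h i h1 h2
  · intro h i h1 h2
    have := h i h1 h2
    rw [if_neg (by omega)] at this
    exact this

lemma edge_sum_convert (hE : IsDCGraph N E) {i : ℕ} (h1 : 1 ≤ i) (hiN : i ≤ N) (x : ℕ → ℝ) :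
    ∑ k ∈ Finset.Icc (i+1) N, (if (i, k) ∈ E then gammaG p E i k * x k else 0)
      = ∑ k ∈ Finset.Icc (i+1) (bG E i), gammaG p E i k * x k := by
  have hsub : Finset.Icc (i+1) (bG E i) ⊆ Finset.Icc (i+1) N :=
    Finset.Icc_subset_Icc le_rfl (bG_le hE h1 hiN)
  rw [← Finset.sum_subset hsub ?_]
  · apply Finset.sum_congr rfl
    intro k hk
    rw [Finset.mem_Icc] at hk
    rw [if_pos (bG_edge hE h1 (by omega) hk.2)]
  · intro k hk hk2
    rw [Finset.mem_Icc] at hk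
    rw [Finset.mem_Icc] at hk2
    rw [if_neg]
    intro hcon
    exact hk2 ⟨hk.1, edge_le_bG hE hcon⟩

/-- the key equivalence between the `i`-th equation and the `i`-th recursion -/
lemma rec_step (hN : 1 ≤ N) (hap : IsParam N a p) (hE : IsDCGraph N E) (ζ : ℕ → ℝ)
    {i : ℕ} (h1 : 1 ≤ i) (hiN : i ≤ N) (hprev : eqS a p E ζ (i-1)) :
    eqS a p E ζ i ↔ RecP N a p E ζ i := by
  set m := bG E (i-1) with hmdef
  set n := bG E i with hndef
  have hm1 : 1 ≤ m := bG_pos _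
  have hmn : m ≤ n := bG_mono_succ hE h1
  have hnN : n ≤ N := bG_le hE h1 hiN
  have hin : i ≤ n := bG_ge i h1
  have him : i - 1 ≤ m := by
    rcases Nat.eq_zero_or_pos (i-1) with h | h
    · omega
    · exact bG_ge _ h
  have key : ∑ j ∈ Finset.Icc 1 n, p j * (Sz ζ i - Sz ζ j + ζ 1)
      = (∑ j ∈ Finset.Icc 1 m, p j * (Sz ζ (i-1) - Sz ζ j + ζ 1))
        + qq p m * ζ i + ζ 1 * (qq p n - qq p m)
        - ∑ k ∈ Finset.Icc (i+1) n, (qq p n - qq p (max (k-1) m)) * ζ k := by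
    rw [sum_split _ hmn]
    have hA : ∑ j ∈ Finset.Icc 1 m, p j * (Sz ζ i - Sz ζ j + ζ 1)
        = (∑ j ∈ Finset.Icc 1 m, p j * (Sz ζ (i-1) - Sz ζ j + ζ 1)) + qq p m * ζ i := by
      have hz : Sz ζ i = Sz ζ (i-1) + ζ i := Sz_succ ζ h1
      rw [Finset.sum_congr rfl (show ∀ j ∈ Finset.Icc 1 m,
          p j * (Sz ζ i - Sz ζ j + ζ 1)
            = p j * (Sz ζ (i-1) - Sz ζ j + ζ 1) + p j * ζ i from
          fun j _ => by rw [hz]; ring), Finset.sum_add_distrib, ← Finset.sum_mul]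
      rfl
    have hB : ∑ j ∈ Finset.Icc (m+1) n, p j * (Sz ζ i - Sz ζ j + ζ 1)
        = ζ 1 * (qq p n - qq p m)
          - ∑ k ∈ Finset.Icc (i+1) n, (qq p n - qq p (max (k-1) m)) * ζ k := by
      have hterm : ∀ j ∈ Finset.Icc (m+1) n, p j * (Sz ζ i - Sz ζ j + ζ 1)
          = p j * ζ 1 - p j * ∑ k ∈ Finset.Icc (i+1) j, ζ k := by
        intro j hj
        rw [Finset.mem_Icc] at hj
        have hij : i ≤ j := by omega
        rw [← Sz_diff ζ hij]
        ring
      rw [Finset.sum_congr rfl hterm, Finset.sum_sub_distrib, ← Finset.sum_mul,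
        ← qq_diff p hmn, sum_swap_S p ζ i m n hmn]
      ring
    rw [hA, hB]
    ring
  unfold eqS RecP
  rw [if_neg (by omega : ¬ i = 0), key]
  unfold eqS at hprev
  rw [← hprev]
  unfold dpar
  by_cases hi1 : i = 1
  · rw [if_pos hi1, if_pos (by omega : i - 1 = 0)]
    have hai : a i = a 1 := by rw [hi1]
    constructor <;> intro h <;> linarith
  · rw [if_neg hi1, if_neg (by omega : ¬ i - 1 = 0)]
    constructor <;> intro h <;> linarith

lemma zG_one : zG N a p E 1 = z1G N a p E := by unfold zG; rw [if_pos rfl]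

lemma RR_one (t : ℝ) : RR N a p E t 1
    = (∑ j ∈ Finset.Icc 1 N, GammaG p E 1 j * dpar a j / qq p (bG E (j-1)))
      - t * ∑ j ∈ Finset.Icc 1 N,
          GammaG p E 1 j * (qq p (bG E j) - qq p (bG E (j-1))) / qq p (bG E (j-1)) := by
  unfold RR uu
  rw [Finset.sum_congr rfl (show ∀ j ∈ Finset.Icc 1 N,
      GammaG p E 1 j * (dpar a j / qq p (bG E (j-1))
        - t * ((qq p (bG E j) - qq p (bG E (j-1))) / qq p (bG E (j-1))))
      = GammaG p E 1 j * dpar a j / qq p (bG E (j-1))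
        - t * (GammaG p E 1 j * (qq p (bG E j) - qq p (bG E (j-1))) / qq p (bG E (j-1)))
      from fun j _ => by ring), Finset.sum_sub_distrib, ← Finset.mul_sum]

lemma zG_eq_RR {i : ℕ} (h2 : 2 ≤ i) :
    zG N a p E i = RR N a p E (z1G N a p E) i := by
  unfold zG
  rw [if_neg (by omega)]
  unfold RR uu
  rw [Finset.sum_congr rfl (show ∀ j ∈ Finset.Icc i N,
      GammaG p E i j * (dpar a j / qq p (bG E (j-1))
        - z1G N a p E * ((qq p (bG E j) - qq p (bG E (j-1))) / qq p (bG E (j-1))))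
      = GammaG p E i j * dpar a j / qq p (bG E (j-1))
        - z1G N a p E * (GammaG p E i j * (qq p (bG E j) - qq p (bG E (j-1)))
            / qq p (bG E (j-1)))
      from fun j _ => by ring), Finset.sum_sub_distrib, ← Finset.mul_sum]

lemma Bden_nonneg (hN : 1 ≤ N) (hap : IsParam N a p) (hE : IsDCGraph N E) :
    0 ≤ ∑ j ∈ Finset.Icc 1 N,
      GammaG p E 1 j * (qq p (bG E j) - qq p (bG E (j-1))) / qq p (bG E (j-1)) := by
  apply Finset.sum_nonneg
  intro j hj
  rw [Finset.mem_Icc] at hj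
  have h1 : 0 < qq p (bG E (j-1)) := qq_pos hap (bG_pos _) (bG_le' hE hN (by omega))
  have h2 : qq p (bG E (j-1)) ≤ qq p (bG E j) :=
    qq_mono hap (bG_mono_succ hE hj.1) (bG_le hE hj.1 hj.2)
  have h3 := GammaG_nonneg hN hap hE 1 j
  apply div_nonneg (mul_nonneg h3 (by linarith)) (le_of_lt h1)

lemma Anum_pos (hN : 1 ≤ N) (hap : IsParam N a p) (hE : IsDCGraph N E) :
    0 < ∑ j ∈ Finset.Icc 1 N, GammaG p E 1 j * dpar a j / qq p (bG E (j-1)) := by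
  apply Finset.sum_pos'
  · intro j hj
    rw [Finset.mem_Icc] at hj
    have h1 : 0 < qq p (bG E (j-1)) := qq_pos hap (bG_pos _) (bG_le' hE hN (by omega))
    exact div_nonneg (mul_nonneg (GammaG_nonneg hN hap hE 1 j)
      (le_of_lt (dpar_pos hap hj.1 hj.2))) (le_of_lt h1)
  · refine ⟨1, Finset.mem_Icc.2 ⟨le_rfl, hN⟩, ?_⟩
    rw [show (1:ℕ) - 1 = 0 from rfl, bG_zero, GammaG_self, one_mul]
    exact div_pos (dpar_pos hap le_rfl hN) (qq_pos hap le_rfl hN)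

lemma z1G_pos (hN : 1 ≤ N) (hap : IsParam N a p) (hE : IsDCGraph N E) :
    0 < z1G N a p E := by
  unfold z1G
  exact div_pos (Anum_pos hN hap hE) (by linarith [Bden_nonneg hN hap hE])

lemma z1G_fix (hN : 1 ≤ N) (hap : IsParam N a p) (hE : IsDCGraph N E) :
    RR N a p E (z1G N a p E) 1 = z1G N a p E := by
  rw [RR_one]
  have hB := Bden_nonneg hN hap hE
  unfold z1G
  set A := ∑ j ∈ Finset.Icc 1 N, GammaG p E 1 j * dpar a j / qq p (bG E (j-1)) with hA
  set B := ∑ j ∈ Finset.Icc 1 N,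
      GammaG p E 1 j * (qq p (bG E j) - qq p (bG E (j-1))) / qq p (bG E (j-1)) with hBdef
  have hD : (1 : ℝ) + B ≠ 0 := by linarith
  field_simp
  ring

lemma zG_eq_RR_all (hN : 1 ≤ N) (hap : IsParam N a p) (hE : IsDCGraph N E) :
    ∀ i, 1 ≤ i → i ≤ N → zG N a p E i = RR N a p E (z1G N a p E) i := by
  intro i h1 hiN
  by_cases hi1 : i = 1
  · rw [hi1, zG_one, z1G_fix hN hap hE]
  · exact zG_eq_RR (by omega)

lemma RecP_zG (hN : 1 ≤ N) (hap : IsParam N a p) (hE : IsDCGraph N E) :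
    ∀ i, 1 ≤ i → i ≤ N → RecP N a p E (zG N a p E) i := by
  intro i h1 hiN
  have hq : qq p (bG E (i-1)) ≠ 0 :=
    ne_of_gt (qq_pos hap (bG_pos _) (bG_le' hE hN (by omega)))
  have emain : zG N a p E i = uu a p E (z1G N a p E) i
      + ∑ k ∈ Finset.Icc (i+1) (bG E i), gammaG p E i k * zG N a p E k := by
    rw [zG_eq_RR_all hN hap hE i h1 hiN, RREC hN hap hE (z1G N a p E) h1 hiN,
      edge_sum_convert hE h1 hiN (RR N a p E (z1G N a p E))]
    congr 1
    apply Finset.sum_congr rfl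
    intro k hk
    rw [Finset.mem_Icc] at hk
    rw [zG_eq_RR_all hN hap hE k (by omega) (le_trans hk.2 (bG_le hE h1 hiN))]
  have huu : qq p (bG E (i-1)) * uu a p E (z1G N a p E) i
      = dpar a i - z1G N a p E * (qq p (bG E i) - qq p (bG E (i-1))) := by
    unfold uu
    field_simp
  have hsum : qq p (bG E (i-1))
        * (∑ k ∈ Finset.Icc (i+1) (bG E i), gammaG p E i k * zG N a p E k)
      = ∑ k ∈ Finset.Icc (i+1) (bG E i),
          (qq p (bG E i) - qq p (max (k-1) (bG E (i-1)))) * zG N a p E k := by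
    rw [Finset.mul_sum]
    apply Finset.sum_congr rfl
    intro k _
    unfold gammaG
    field_simp
  unfold RecP
  rw [emain, mul_add, huu, hsum, zG_one]

lemma form (hN : 1 ≤ N) (hap : IsParam N a p) (hE : IsDCGraph N E) (ζ : ℕ → ℝ)
    (hζ : SolvesS N a p E ζ) :
    ∀ i, 1 ≤ i → i ≤ N → ζ i = zG N a p E i := by
  have hrec : ∀ i, 1 ≤ i → i ≤ N → RecP N a p E ζ i := by
    intro i h1 hiN
    have hprev : eqS a p E ζ (i-1) := by
      rcases Nat.eq_zero_or_pos (i-1) with h | h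
      · rw [h]; exact eqS_zero ζ
      · exact (solves_iff ζ).1 hζ (i-1) h (by omega)
    exact (rec_step hN hap hE ζ h1 hiN hprev).1 ((solves_iff ζ).1 hζ i h1 hiN)
  have hcore : ∀ i, 1 ≤ i → i ≤ N → (∀ k, i < k → k ≤ N → ζ k = RR N a p E (ζ 1) k) →
      ζ i = RR N a p E (ζ 1) i := by
    intro i h1 hiN ih
    have hq : qq p (bG E (i-1)) ≠ 0 :=
      ne_of_gt (qq_pos hap (bG_pos _) (bG_le' hE hN (by omega)))
    have hRec := hrec i h1 hiN
    unfold RecP at hRec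
    have hs1 : ∑ k ∈ Finset.Icc (i+1) (bG E i),
          (qq p (bG E i) - qq p (max (k-1) (bG E (i-1)))) * ζ k
        = ∑ k ∈ Finset.Icc (i+1) (bG E i),
          (qq p (bG E i) - qq p (max (k-1) (bG E (i-1)))) * RR N a p E (ζ 1) k := by
      apply Finset.sum_congr rfl
      intro k hk
      rw [Finset.mem_Icc] at hk
      rw [ih k (by omega) (le_trans hk.2 (bG_le hE h1 hiN))]
    have e2 := RREC hN hap hE (ζ 1) h1 hiN
    rw [edge_sum_convert hE h1 hiN (RR N a p E (ζ 1))] at e2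
    have hsum : qq p (bG E (i-1))
          * (∑ k ∈ Finset.Icc (i+1) (bG E i), gammaG p E i k * RR N a p E (ζ 1) k)
        = ∑ k ∈ Finset.Icc (i+1) (bG E i),
            (qq p (bG E i) - qq p (max (k-1) (bG E (i-1)))) * RR N a p E (ζ 1) k := by
      rw [Finset.mul_sum]
      apply Finset.sum_congr rfl
      intro k _
      unfold gammaG
      field_simp
    have huu : qq p (bG E (i-1)) * uu a p E (ζ 1) i
        = dpar a i - ζ 1 * (qq p (bG E i) - qq p (bG E (i-1))) := by
      unfold uu
      field_simp
    have hfin : qq p (bG E (i-1)) * ζ i = qq p (bG E (i-1)) * RR N a p E (ζ 1) i := by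
      rw [e2, mul_add, huu, hsum, hRec, hs1]
    exact mul_left_cancel₀ hq hfin
  have hmain : ∀ d i, 1 ≤ i → i ≤ N → N - i ≤ d → ζ i = RR N a p E (ζ 1) i := by
    intro d
    induction d with
    | zero =>
      intro i h1 hiN h3
      exact hcore i h1 hiN (fun k hk1 hk2 => by omega)
    | succ d ih =>
      intro i h1 hiN h3
      exact hcore i h1 hiN (fun k hk1 hk2 => ih k (by omega) hk2 (by omega))
  have h1R : ζ 1 = RR N a p E (ζ 1) 1 := hmain (N-1) 1 le_rfl hN (by omega)
  rw [RR_one] at h1R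
  have hB := Bden_nonneg hN hap hE
  have hz1 : ζ 1 = z1G N a p E := by
    unfold z1G
    set A := ∑ j ∈ Finset.Icc 1 N, GammaG p E 1 j * dpar a j / qq p (bG E (j-1)) with hA
    set B := ∑ j ∈ Finset.Icc 1 N,
        GammaG p E 1 j * (qq p (bG E j) - qq p (bG E (j-1))) / qq p (bG E (j-1)) with hBdef
    have hD : (1 : ℝ) + B ≠ 0 := by linarith
    rw [eq_div_iff hD]
    have hexp : ζ 1 * (1 + B) = ζ 1 + ζ 1 * B := by ring
    rw [hexp]
    linarith
  intro i h1 hiN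
  by_cases hi1 : i = 1
  · rw [hi1, zG_one, ← hz1]
  · rw [hmain (N - i) i h1 hiN le_rfl, hz1, ← zG_eq_RR_all hN hap hE i h1 hiN]

lemma exist (hN : 1 ≤ N) (hap : IsParam N a p) (hE : IsDCGraph N E) :
    SolvesS N a p E (zG N a p E) := by
  rw [solves_iff]
  have hall : ∀ i, i ≤ N → eqS a p E (zG N a p E) i := by
    intro i
    induction i with
    | zero => intro _; exact eqS_zero _
    | succ i ih =>
      intro hiN
      have hprev : eqS a p E (zG N a p E) i := ih (by omega)
      exact (rec_step hN hap hE (zG N a p E) (by omega) hiN hprev).2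
        (RecP_zG hN hap hE (i+1) (by omega) hiN)
  intro i h1 h2
  exact hall i h2

end System

section Unique
variable {N : ℕ} {a p : ℕ → ℝ} {s s' : ℕ → ℝ}

lemma stationary_pos (hs : IsStationaryTuple N a p s) :
    ∀ i, 1 ≤ i → i ≤ N → 0 < s i := fun i h1 h2 =>
  lt_of_lt_of_le hs.1 (mono_succ hs.2.1 1 i le_rfl h1 h2)

lemma unique_aux (hN : 1 ≤ N) (hap : IsParam N a p)
    (hs : IsStationaryTuple N a p s) (hs' : IsStationaryTuple N a p s') (h1 : s 1 ≤ s' 1) :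
    s 1 = s' 1 ∧ ∀ i, 1 ≤ i → i ≤ N → s' i ≤ s i := by
  obtain ⟨istar, histar, hmax⟩ := (Finset.Icc 1 N).exists_max_image
    (fun i => (s' i - s' 1) - (s i - s 1)) ⟨1, Finset.mem_Icc.2 ⟨le_rfl, hN⟩⟩
  rw [Finset.mem_Icc] at histar
  have hM0 : 0 ≤ (s' istar - s' 1) - (s istar - s 1) := by
    have := hmax 1 (Finset.mem_Icc.2 ⟨le_rfl, hN⟩)
    linarith
  have hterm : ∀ j ∈ Finset.Icc 1 N,
      p j * pos' (s istar - s j + s 1) ≤ p j * pos' (s' istar - s' j + s' 1) := by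
    intro j hj
    rw [Finset.mem_Icc] at hj
    have hgj := hmax j (Finset.mem_Icc.2 hj)
    have hle : s istar - s j + s 1 ≤ s' istar - s' j + s' 1 := by linarith
    exact mul_le_mul_of_nonneg_left (pos'_mono hle) (le_of_lt (hap.2.2 j hj.1 hj.2))
  have hsum : ∑ j ∈ Finset.Icc 1 N, p j * pos' (s istar - s j + s 1)
      = ∑ j ∈ Finset.Icc 1 N, p j * pos' (s' istar - s' j + s' 1) := by
    rw [← hs.2.2 istar histar.1 histar.2, ← hs'.2.2 istar histar.1 histar.2]
  have heq : ∀ j ∈ Finset.Icc 1 N,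
      p j * pos' (s istar - s j + s 1) = p j * pos' (s' istar - s' j + s' 1) := by
    have hzero : ∑ j ∈ Finset.Icc 1 N,
        (p j * pos' (s' istar - s' j + s' 1) - p j * pos' (s istar - s j + s 1)) = 0 := by
      rw [Finset.sum_sub_distrib, hsum]
      ring
    intro j hj
    have := (Finset.sum_eq_zero_iff_of_nonneg
      (fun j hj => by linarith [hterm j hj])).1 hzero j hj
    linarith
  have h11 : s 1 = s' 1 := by
    have hj := heq istar (Finset.mem_Icc.2 ⟨histar.1, histar.2⟩)
    have e1 : s istar - s istar + s 1 = s 1 := by ring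
    have e2 : s' istar - s' istar + s' 1 = s' 1 := by ring
    rw [e1, e2, pos'_of_nonneg (le_of_lt hs.1), pos'_of_nonneg (le_of_lt hs'.1)] at hj
    have hp : 0 < p istar := hap.2.2 istar histar.1 histar.2
    exact mul_left_cancel₀ (ne_of_gt hp) hj
  have hstar : s istar = s' istar := by
    have hj := heq 1 (Finset.mem_Icc.2 ⟨le_rfl, hN⟩)
    have e1 : s istar - s 1 + s 1 = s istar := by ring
    have e2 : s' istar - s' 1 + s' 1 = s' istar := by ring
    rw [e1, e2, pos'_of_nonneg (le_of_lt (stationary_pos hs istar histar.1 histar.2)),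
      pos'_of_nonneg (le_of_lt (stationary_pos hs' istar histar.1 histar.2))] at hj
    have hp : 0 < p 1 := hap.2.2 1 le_rfl hN
    exact mul_left_cancel₀ (ne_of_gt hp) hj
  refine ⟨h11, ?_⟩
  intro i hi1 hiN
  have := hmax i (Finset.mem_Icc.2 ⟨hi1, hiN⟩)
  linarith

lemma unique (hN : 1 ≤ N) (hap : IsParam N a p)
    (hs : IsStationaryTuple N a p s) (hs' : IsStationaryTuple N a p s') :
    ∀ i, 1 ≤ i → i ≤ N → s i = s' i := by
  rcases le_total (s 1) (s' 1) with h | h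
  · obtain ⟨h11, hle⟩ := unique_aux hN hap hs hs' h
    obtain ⟨_, hge⟩ := unique_aux hN hap hs' hs (le_of_eq h11.symm)
    intro i h1 h2
    exact le_antisymm (hge i h1 h2) (hle i h1 h2)
  · obtain ⟨h11, hle⟩ := unique_aux hN hap hs' hs h
    obtain ⟨_, hge⟩ := unique_aux hN hap hs hs' (le_of_eq h11.symm)
    intro i h1 h2
    exact le_antisymm (hle i h1 h2) (hge i h1 h2)

end Unique

section Backward
variable {N : ℕ} {a p : ℕ → ℝ} {E : Finset (ℕ × ℕ)}

lemma ZG_def (i j : ℕ) : ZG N a p E i j = ∑ l ∈ Finset.Icc (i+1) j, zG N a p E l := rfl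

/-- positivity of `zG` under the two conditions -/
lemma zG_pos2 (hN : 1 ≤ N) (hap : IsParam N a p) (hE : IsDCGraph N E)
    (hminC : ∀ e ∈ minNE N E, z1G N a p E ≤ ZG N a p E e.1 e.2) :
    ∀ l, 2 ≤ l → l ≤ N → 0 < zG N a p E l := by
  have hz1 := z1G_pos hN hap hE
  have hcore : ∀ l, 2 ≤ l → l ≤ N → (∀ m', l < m' → m' ≤ N → 0 < zG N a p E m') →
      0 < zG N a p E l := by
    intro l hl2 hlN ih
    by_cases hedge : ((l-1, l) : ℕ × ℕ) ∈ E
    · -- case B : (l-1, l) is an edge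
      by_contra hneg
      push_neg at hneg
      have hlm : l ≤ bG E (l-1) := edge_le_bG hE hedge
      have hmn : bG E (l-1) ≤ bG E l := bG_mono_succ hE (by omega)
      have hnN : bG E l ≤ N := bG_le hE (by omega) hlN
      have hRec := RecP_zG hN hap hE l (by omega) hlN
      unfold RecP at hRec
      rw [zG_one] at hRec
      have hswap := sum_swap_S p (zG N a p E) l (bG E (l-1)) (bG E l) hmn
      have hkey : ∀ j ∈ Finset.Icc (bG E (l-1) + 1) (bG E l),
          z1G N a p E ≤ ∑ k ∈ Finset.Icc (l+1) j, zG N a p E k := by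
        intro j hj
        rw [Finset.mem_Icc] at hj
        have hjN : j ≤ N := le_trans hj.2 hnN
        have hjl : l < j := by omega
        have hnonedge : ((l-1, j) : ℕ × ℕ) ∉ E := by
          intro hcon
          have h := edge_le_bG hE hcon
          have h' : j ≤ bG E (l-1) := h
          omega
        have hsd : ((l-1, j) : ℕ × ℕ) ∈ ENfin N \ E :=
          Finset.mem_sdiff.2 ⟨mem_ENfin.2 ⟨by omega, by omega, hjN⟩, hnonedge⟩
        obtain ⟨e', he', hnest⟩ := minNE_cover hsd
        have hmc := hminC e' he'
        have he'm : e' ∈ ENfin N \ E := (Finset.mem_filter.1 he').1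
        have he'b := mem_ENfin.1 (Finset.mem_sdiff.1 he'm).1
        have he'ne : e' ∉ E := (Finset.mem_sdiff.1 he'm).2
        have hA : l - 1 ≤ e'.1 := hnest.1
        have hB : e'.1 < e'.2 := hnest.2.1
        have hC : e'.2 ≤ j := hnest.2.2
        rw [ZG_def] at hmc
        by_cases hc : e'.1 = l - 1
        · have he'2 : l + 1 ≤ e'.2 := by
            rcases Nat.lt_or_ge e'.2 (l+1) with h | h
            · exfalso
              have h2 : e'.2 = l := by omega
              apply he'ne
              have : e' = ((l-1, l) : ℕ × ℕ) := Prod.ext hc h2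
              rw [this]
              exact hedge
            · exact h
          have hstep1 : ∑ k ∈ Finset.Icc (e'.1+1) e'.2, zG N a p E k
              = zG N a p E l + ∑ k ∈ Finset.Icc (l+1) e'.2, zG N a p E k := by
            rw [show e'.1 + 1 = l by omega, Icc_eq_insert (by omega),
              Finset.sum_insert (by simp)]
          have hstep2 : ∑ k ∈ Finset.Icc (l+1) j, zG N a p E k
              = (∑ k ∈ Finset.Icc (l+1) e'.2, zG N a p E k)
                + ∑ k ∈ Finset.Icc (e'.2+1) j, zG N a p E k :=
            sum_split' _ (by omega) hC
          have hflank : 0 ≤ ∑ k ∈ Finset.Icc (e'.2+1) j, zG N a p E k := by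
            apply Finset.sum_nonneg
            intro k hk
            rw [Finset.mem_Icc] at hk
            exact le_of_lt (ih k (by omega) (by omega))
          rw [hstep1] at hmc
          rw [hstep2]
          linarith
        · have hc' : l ≤ e'.1 := by omega
          have hstep : ∑ k ∈ Finset.Icc (l+1) j, zG N a p E k
              = (∑ k ∈ Finset.Icc (l+1) e'.1, zG N a p E k)
                + ((∑ k ∈ Finset.Icc (e'.1+1) e'.2, zG N a p E k)
                  + ∑ k ∈ Finset.Icc (e'.2+1) j, zG N a p E k) := by
            rw [← sum_split' _ (by omega : e'.1 ≤ e'.2) (by omega : e'.2 ≤ j),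
              ← sum_split' _ (by omega : l ≤ e'.1) (by omega : e'.1 ≤ j)]
          have hflank1 : 0 ≤ ∑ k ∈ Finset.Icc (l+1) e'.1, zG N a p E k := by
            apply Finset.sum_nonneg
            intro k hk
            rw [Finset.mem_Icc] at hk
            exact le_of_lt (ih k (by omega) (by omega))
          have hflank2 : 0 ≤ ∑ k ∈ Finset.Icc (e'.2+1) j, zG N a p E k := by
            apply Finset.sum_nonneg
            intro k hk
            rw [Finset.mem_Icc] at hk
            exact le_of_lt (ih k (by omega) (by omega))
          rw [hstep]
          linarith
      have hge : (qq p (bG E l) - qq p (bG E (l-1))) * z1G N a p E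
          ≤ ∑ k ∈ Finset.Icc (l+1) (bG E l),
              (qq p (bG E l) - qq p (max (k-1) (bG E (l-1)))) * zG N a p E k := by
        rw [← hswap, qq_diff p hmn, Finset.sum_mul]
        apply Finset.sum_le_sum
        intro j hj
        rw [Finset.mem_Icc] at hj
        have hpj : 0 < p j := hap.2.2 j (by omega) (le_trans hj.2 hnN)
        have := hkey j (Finset.mem_Icc.2 hj)
        calc p j * z1G N a p E ≤ p j * ∑ k ∈ Finset.Icc (l+1) j, zG N a p E k := by
              exact mul_le_mul_of_nonneg_left this (le_of_lt hpj)
          _ = _ := rfl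
      have hq : 0 < qq p (bG E (l-1)) :=
        qq_pos hap (bG_pos _) (le_trans hmn hnN)
      have hd := dpar_pos hap (show 1 ≤ l by omega) hlN
      have hnonpos : qq p (bG E (l-1)) * zG N a p E l ≤ 0 :=
        mul_nonpos_of_nonneg_of_nonpos (le_of_lt hq) hneg
      linarith
    · -- case A : (l-1, l) is not an edge, hence a minimal non-edge
      have hmem : ((l-1, l) : ℕ × ℕ) ∈ minNE N E := by
        unfold minNE
        rw [Finset.mem_filter]
        refine ⟨Finset.mem_sdiff.2 ⟨mem_ENfin.2 ⟨by omega, by omega, hlN⟩, hedge⟩, ?_⟩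
        intro e' he' hnest
        have hA : l - 1 ≤ e'.1 := hnest.1
        have hB : e'.1 < e'.2 := hnest.2.1
        have hC : e'.2 ≤ l := hnest.2.2
        exact Prod.ext (by omega) (by omega)
      have hmc := hminC _ hmem
      rw [ZG_def] at hmc
      have hZ : ∑ k ∈ Finset.Icc ((l-1 : ℕ)+1) l, zG N a p E k = zG N a p E l := by
        rw [show l - 1 + 1 = l by omega, Finset.Icc_self, Finset.sum_singleton]
      rw [show ((l-1,l) : ℕ × ℕ).1 = l - 1 from rfl, show ((l-1,l) : ℕ × ℕ).2 = l from rfl,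
        hZ] at hmc
      linarith
  have hmain : ∀ d l, 2 ≤ l → l ≤ N → N - l ≤ d → 0 < zG N a p E l := by
    intro d
    induction d with
    | zero =>
      intro l h1 h2 h3
      exact hcore l h1 h2 (fun m' hm1 hm2 => by omega)
    | succ d ih =>
      intro l h1 h2 h3
      exact hcore l h1 h2 (fun m' hm1 hm2 => ih m' (by omega) hm2 (by omega))
  intro l h1 h2
  exact hmain (N - l) l h1 h2 le_rfl

/-- all edges satisfy the strict inequality -/
lemma edge_lt_all (hN : 1 ≤ N) (hap : IsParam N a p) (hE : IsDCGraph N E)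
    (hmaxC : ∀ e ∈ maxE E, ZG N a p E e.1 e.2 < z1G N a p E)
    (hpos : ∀ l, 2 ≤ l → l ≤ N → 0 < zG N a p E l) :
    ∀ e ∈ E, ZG N a p E e.1 e.2 < z1G N a p E := by
  intro e he
  obtain ⟨f, hf, hnest⟩ := maxE_cover hE he
  have hfE : f ∈ E := (Finset.mem_filter.1 hf).1
  have hfb := mem_ENfin.1 (hE.1 hfE)
  have heb := mem_ENfin.1 (hE.1 he)
  have hC := hmaxC f hf
  obtain ⟨hn1, hn2, hn3⟩ := hnest
  rw [ZG_def] at hC ⊢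
  have hsplit : ∑ k ∈ Finset.Icc (f.1+1) f.2, zG N a p E k
      = (∑ k ∈ Finset.Icc (f.1+1) e.1, zG N a p E k)
        + ((∑ k ∈ Finset.Icc (e.1+1) e.2, zG N a p E k)
          + ∑ k ∈ Finset.Icc (e.2+1) f.2, zG N a p E k) := by
    rw [← sum_split' _ (by omega : e.1 ≤ e.2) (by omega : e.2 ≤ f.2),
      ← sum_split' _ (by omega : f.1 ≤ e.1) (by omega : e.1 ≤ f.2)]
  have hflank1 : 0 ≤ ∑ k ∈ Finset.Icc (f.1+1) e.1, zG N a p E k := by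
    apply Finset.sum_nonneg
    intro k hk
    rw [Finset.mem_Icc] at hk
    have : f.1 + 1 ≤ k := hk.1
    have hfb1 : 1 ≤ f.1 := hfb.1
    exact le_of_lt (hpos k (by omega) (by omega))
  have hflank2 : 0 ≤ ∑ k ∈ Finset.Icc (e.2+1) f.2, zG N a p E k := by
    apply Finset.sum_nonneg
    intro k hk
    rw [Finset.mem_Icc] at hk
    have hfb2 : f.2 ≤ N := hfb.2.2
    have heb1 : 1 ≤ e.1 := heb.1
    exact le_of_lt (hpos k (by omega) (by omega))
  rw [hsplit] at hC
  linarith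

/-- all non-edges satisfy the weak inequality -/
lemma nonedge_ge_all (hN : 1 ≤ N) (hap : IsParam N a p) (hE : IsDCGraph N E)
    (hminC : ∀ e ∈ minNE N E, z1G N a p E ≤ ZG N a p E e.1 e.2)
    (hpos : ∀ l, 2 ≤ l → l ≤ N → 0 < zG N a p E l) :
    ∀ e, e ∈ ENfin N → e ∉ E → z1G N a p E ≤ ZG N a p E e.1 e.2 := by
  intro e heN heE
  have hsd : e ∈ ENfin N \ E := Finset.mem_sdiff.2 ⟨heN, heE⟩
  obtain ⟨f, hf, hnest⟩ := minNE_cover hsd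
  have hfm : f ∈ ENfin N \ E := (Finset.mem_filter.1 hf).1
  have hfb := mem_ENfin.1 (Finset.mem_sdiff.1 hfm).1
  have heb := mem_ENfin.1 heN
  have hC := hminC f hf
  obtain ⟨hn1, hn2, hn3⟩ := hnest
  rw [ZG_def] at hC ⊢
  have hsplit : ∑ k ∈ Finset.Icc (e.1+1) e.2, zG N a p E k
      = (∑ k ∈ Finset.Icc (e.1+1) f.1, zG N a p E k)
        + ((∑ k ∈ Finset.Icc (f.1+1) f.2, zG N a p E k)
          + ∑ k ∈ Finset.Icc (f.2+1) e.2, zG N a p E k) := by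
    rw [← sum_split' _ (by omega : f.1 ≤ f.2) (by omega : f.2 ≤ e.2),
      ← sum_split' _ (by omega : e.1 ≤ f.1) (by omega : f.1 ≤ e.2)]
  have hflank1 : 0 ≤ ∑ k ∈ Finset.Icc (e.1+1) f.1, zG N a p E k := by
    apply Finset.sum_nonneg
    intro k hk
    rw [Finset.mem_Icc] at hk
    have heb1 : 1 ≤ e.1 := heb.1
    have : f.1 < f.2 := hfb.2.1
    have : f.2 ≤ N := hfb.2.2
    exact le_of_lt (hpos k (by omega) (by omega))
  have hflank2 : 0 ≤ ∑ k ∈ Finset.Icc (f.2+1) e.2, zG N a p E k := by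
    apply Finset.sum_nonneg
    intro k hk
    rw [Finset.mem_Icc] at hk
    have : e.2 ≤ N := heb.2.2
    have : 1 ≤ f.1 := hfb.1
    exact le_of_lt (hpos k (by omega) (by omega))
  rw [hsplit]
  linarith

end Backward

section Main
variable {N : ℕ} {a p : ℕ → ℝ} {E : Finset (ℕ × ℕ)} {s : ℕ → ℝ}

/-- the increments of a tuple `s` -/
noncomputable def zeta (s : ℕ → ℝ) (l : ℕ) : ℝ := if l = 1 then s 1 else s l - s (l-1)

lemma Sz_zeta : ∀ l, 1 ≤ l → Sz (zeta s) l = s l := by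
  intro l h1
  induction l, h1 using Nat.le_induction with
  | base =>
    unfold Sz zeta
    simp
  | succ n hn ih =>
    rw [Sz_succ (zeta s) (by omega), show n + 1 - 1 = n from rfl, ih]
    unfold zeta
    rw [if_neg (by omega), show n + 1 - 1 = n from rfl]
    ring

lemma forward (hN : 1 ≤ N) (hap : IsParam N a p) (hE : IsDCGraph N E)
    (hs : IsStationaryTuple N a p s) (hG : GrEdges N s = E) :
    (∀ e ∈ maxE E, ZG N a p E e.1 e.2 < z1G N a p E) ∧
    (∀ e ∈ minNE N E, z1G N a p E ≤ ZG N a p E e.1 e.2) := by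
  have hmono : ∀ i j, 1 ≤ i → i ≤ j → j ≤ N → s i ≤ s j := mono_succ hs.2.1
  have hsolves : SolvesS N a p E (zeta s) := by
    intro i h1 hiN
    have hb1 : i ≤ bG E i := bG_ge i h1
    have hbN : bG E i ≤ N := bG_le hE h1 hiN
    have hstat := hs.2.2 i h1 hiN
    rw [hstat, sum_split (fun j => p j * pos' (s i - s j + s 1)) hbN]
    have hzero : ∑ j ∈ Finset.Icc (bG E i + 1) N, p j * pos' (s i - s j + s 1) = 0 := by
      apply Finset.sum_eq_zero
      intro j hj
      rw [Finset.mem_Icc] at hj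
      have hij : i < j := by omega
      have hnedge : ((i,j) : ℕ×ℕ) ∉ E := by
        intro hcon
        have h' : j ≤ bG E i := edge_le_bG hE hcon
        omega
      have hgr : ((i,j) : ℕ×ℕ) ∉ GrEdges N s := by rw [hG]; exact hnedge
      have hge : ¬ (s j - s i < s 1) := by
        intro hcon
        apply hgr
        unfold GrEdges
        rw [Finset.mem_filter]
        exact ⟨mem_ENfin.2 ⟨h1, hij, hj.2⟩, hcon⟩
      rw [pos'_of_nonpos (by linarith), mul_zero]
    rw [hzero, add_zero]
    apply Finset.sum_congr rfl
    intro j hj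
    rw [Finset.mem_Icc] at hj
    have hSi : ∑ l ∈ Finset.Icc 1 i, zeta s l = s i := Sz_zeta i h1
    have hSj : ∑ l ∈ Finset.Icc 1 j, zeta s l = s j := Sz_zeta j hj.1
    have hz1 : zeta s 1 = s 1 := by unfold zeta; rw [if_pos rfl]
    rw [hSi, hSj, hz1]
    by_cases hji : j ≤ i
    · rw [pos'_of_nonneg (by linarith [hmono j i hj.1 hji hiN, hs.1])]
    · have hedge := bG_edge hE h1 (by omega) hj.2
      rw [← hG] at hedge
      unfold GrEdges at hedge
      rw [Finset.mem_filter] at hedge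
      have hlt : s j - s i < s 1 := hedge.2
      rw [pos'_of_nonneg (by linarith)]
  have hform := form hN hap hE (zeta s) hsolves
  have hz1G : z1G N a p E = s 1 := by
    rw [← zG_one, ← hform 1 le_rfl hN]
    unfold zeta
    rw [if_pos rfl]
  have hZG : ∀ i j : ℕ, 1 ≤ i → i ≤ j → j ≤ N → ZG N a p E i j = s j - s i := by
    intro i j h1 hij hjN
    rw [ZG_def]
    have : ∑ l ∈ Finset.Icc (i+1) j, zG N a p E l
        = ∑ l ∈ Finset.Icc (i+1) j, zeta s l := by
      apply Finset.sum_congr rfl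
      intro l hl
      rw [Finset.mem_Icc] at hl
      rw [hform l (by omega) (by omega)]
    rw [this, ← Sz_diff (zeta s) hij, Sz_zeta j (by omega), Sz_zeta i h1]
  constructor
  · intro e he
    have heE : e ∈ E := (Finset.mem_filter.1 he).1
    have hb := mem_ENfin.1 (hE.1 heE)
    rw [← hG] at heE
    unfold GrEdges at heE
    rw [Finset.mem_filter] at heE
    have hlt : s e.2 - s e.1 < s 1 := heE.2
    rw [hZG e.1 e.2 hb.1 (le_of_lt hb.2.1) hb.2.2, hz1G]
    exact hlt
  · intro e he
    have hesd : e ∈ ENfin N \ E := (Finset.mem_filter.1 he).1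
    have heN := (Finset.mem_sdiff.1 hesd).1
    have heE := (Finset.mem_sdiff.1 hesd).2
    have hb := mem_ENfin.1 heN
    have hge : ¬ (s e.2 - s e.1 < s 1) := by
      intro hcon
      apply heE
      rw [← hG]
      unfold GrEdges
      rw [Finset.mem_filter]
      exact ⟨heN, hcon⟩
    rw [hZG e.1 e.2 hb.1 (le_of_lt hb.2.1) hb.2.2, hz1G]
    linarith

end Main

section Main2
variable (N : ℕ) (a p : ℕ → ℝ) (E : Finset (ℕ × ℕ))

/-- the candidate stationary tuple built from `zG` -/
noncomputable def sG (l : ℕ) : ℝ := ∑ m ∈ Finset.Icc 1 l, zG N a p E m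

variable {N a p E} {s : ℕ → ℝ}

lemma sG_def (l : ℕ) : ∑ m ∈ Finset.Icc 1 l, zG N a p E m = sG N a p E l := rfl

lemma sG_one : sG N a p E 1 = z1G N a p E := by
  unfold sG
  rw [Finset.Icc_self, Finset.sum_singleton, zG_one]

lemma sG_diff {i j : ℕ} (h : i ≤ j) :
    sG N a p E j - sG N a p E i = ZG N a p E i j := by
  rw [ZG_def]
  exact Sz_diff (zG N a p E) h

lemma backward (hN : 1 ≤ N) (hap : IsParam N a p) (hE : IsDCGraph N E)
    (hs : IsStationaryTuple N a p s)
    (hmaxC : ∀ e ∈ maxE E, ZG N a p E e.1 e.2 < z1G N a p E)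
    (hminC : ∀ e ∈ minNE N E, z1G N a p E ≤ ZG N a p E e.1 e.2) :
    GrEdges N s = E := by
  have hz1 := z1G_pos hN hap hE
  have hpos := zG_pos2 hN hap hE hminC
  have hedge := edge_lt_all hN hap hE hmaxC hpos
  have hnon := nonedge_ge_all hN hap hE hminC hpos
  have htmono : ∀ i, 1 ≤ i → i < N → sG N a p E i < sG N a p E (i+1) := by
    intro i h1 hiN
    have hstep : sG N a p E (i+1) = sG N a p E i + zG N a p E (i+1) := by
      unfold sG
      rw [sum_split (zG N a p E) (show i ≤ i + 1 by omega)]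
      congr 1
      rw [Finset.Icc_self, Finset.sum_singleton]
    rw [hstep]
    linarith [hpos (i+1) (by omega) (by omega)]
  have hmono : ∀ i j, 1 ≤ i → i ≤ j → j ≤ N → sG N a p E i ≤ sG N a p E j :=
    mono_succ htmono
  have hsolves := exist hN hap hE
  have hstat : IsStationaryTuple N a p (sG N a p E) := by
    refine ⟨by rw [sG_one]; exact hz1, htmono, ?_⟩
    intro i h1 hiN
    have hb1 : i ≤ bG E i := bG_ge i h1
    have hbN : bG E i ≤ N := bG_le hE h1 hiN
    have heq := hsolves i h1 hiN
    rw [heq, sum_split (fun j => p j * pos' (sG N a p E i - sG N a p E j + sG N a p E 1)) hbN]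
    have hzero : ∑ j ∈ Finset.Icc (bG E i + 1) N,
        p j * pos' (sG N a p E i - sG N a p E j + sG N a p E 1) = 0 := by
      apply Finset.sum_eq_zero
      intro j hj
      rw [Finset.mem_Icc] at hj
      have hij : i < j := by omega
      have hnedge : ((i,j) : ℕ×ℕ) ∉ E := by
        intro hcon
        have h' : j ≤ bG E i := edge_le_bG hE hcon
        omega
      have hge := hnon (i, j) (mem_ENfin.2 ⟨h1, hij, hj.2⟩) hnedge
      have hzd : sG N a p E j - sG N a p E i = ZG N a p E i j := sG_diff (by omega)
      rw [pos'_of_nonpos (by rw [sG_one]; linarith), mul_zero]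
    rw [hzero, add_zero]
    apply Finset.sum_congr rfl
    intro j hj
    rw [Finset.mem_Icc] at hj
    rw [sG_def, sG_def, show zG N a p E 1 = sG N a p E 1 from by
      rw [sG_one, zG_one]]
    by_cases hji : j ≤ i
    · have h0 : 0 < sG N a p E 1 := by rw [sG_one]; exact hz1
      rw [pos'_of_nonneg (by linarith [hmono j i hj.1 hji hiN])]
    · have hedge' := hedge (i, j) (bG_edge hE h1 (by omega) hj.2)
      have hzd : sG N a p E j - sG N a p E i = ZG N a p E i j := sG_diff (by omega)
      rw [pos'_of_nonneg (by rw [sG_one]; linarith)]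
  have hGrt : GrEdges N (sG N a p E) = E := by
    ext e
    unfold GrEdges
    rw [Finset.mem_filter]
    constructor
    · rintro ⟨heN, hlt⟩
      by_contra heE
      have hge := hnon e heN heE
      have hb := mem_ENfin.1 heN
      have hzd : sG N a p E e.2 - sG N a p E e.1 = ZG N a p E e.1 e.2 :=
        sG_diff (le_of_lt hb.2.1)
      rw [hzd] at hlt
      rw [sG_one] at hlt
      linarith
    · intro heE
      have hb := mem_ENfin.1 (hE.1 heE)
      refine ⟨hE.1 heE, ?_⟩
      have hlt := hedge e heE
      have hzd : sG N a p E e.2 - sG N a p E e.1 = ZG N a p E e.1 e.2 :=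
        sG_diff (le_of_lt hb.2.1)
      rw [hzd, sG_one]
      exact hlt
  have huniq := unique hN hap hs hstat
  have hGr : GrEdges N s = GrEdges N (sG N a p E) := by
    unfold GrEdges
    apply Finset.filter_congr
    intro e heN
    have hb := mem_ENfin.1 heN
    have h2 : s e.2 = sG N a p E e.2 := huniq e.2 (by omega) hb.2.2
    have h1' : s e.1 = sG N a p E e.1 := huniq e.1 hb.1 (by omega)
    have h0 : s 1 = sG N a p E 1 := huniq 1 le_rfl hN
    rw [h2, h1', h0]
  rw [hGr, hGrt]

end Main2

end S10

/-- inequalities characterizing `P_G`, Proposition 4.9. -/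
theorem stmt_10 (N : ℕ) (hN : 1 ≤ N) (a p : ℕ → ℝ) (hap : IsParam N a p)
    (E : Finset (ℕ × ℕ)) (hE : IsDCGraph N E)
    (s : ℕ → ℝ) (hs : IsStationaryTuple N a p s) :
    GrEdges N s = E ↔
      ((∀ e ∈ maxE E, ZG N a p E e.1 e.2 < z1G N a p E) ∧
       (∀ e ∈ minNE N E, z1G N a p E ≤ ZG N a p E e.1 e.2)) := by
  constructor
  · intro hG
    exact S10.forward hN hap hE hs hG
  · rintro ⟨hmaxC, hminC⟩
    exact S10.backward hN hap hE hs hmaxC hminC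
end

section
/- For every DC graph G on {1,...,N}, the interior of P_G relative to P^{2N} is non-empty. -/
open Filter Topology
open scoped Classical

-- ### auxiliary

lemma mem_ENfin' {N : ℕ} {e : ℕ × ℕ} : e ∈ ENfin N ↔ 1 ≤ e.1 ∧ e.1 < e.2 ∧ e.2 ≤ N := by
  simp only [ENfin, Finset.mem_filter, Finset.mem_product, Finset.mem_Icc]
  omega

lemma bG_ge {E : Finset (ℕ × ℕ)} {i : ℕ} (hi : 1 ≤ i) : i ≤ bG E i := by
  simp only [bG, if_neg (by omega : i ≠ 0)]; exact le_max_left _ _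

lemma bG_le {N : ℕ} {E : Finset (ℕ × ℕ)} (hE : IsDCGraph N E) {i : ℕ} (hi : 1 ≤ i)
    (hiN : i ≤ N) : bG E i ≤ N := by
  simp only [bG, if_neg (by omega : i ≠ 0)]
  refine max_le hiN (Finset.sup_le fun e he => ?_)
  have := hE.1 (Finset.mem_filter.1 he).1
  exact (mem_ENfin'.1 this).2.2

lemma bG_iff {N : ℕ} {E : Finset (ℕ × ℕ)} (hE : IsDCGraph N E) {i j : ℕ} (hi : 1 ≤ i)
    (hij : i < j) : j ≤ bG E i ↔ (i, j) ∈ E := by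
  simp only [bG, if_neg (by omega : i ≠ 0)]
  constructor
  · intro h
    have h2 : j ≤ (E.filter fun e => e.1 = i).sup fun e => e.2 := by omega
    obtain ⟨e, he, hje⟩ := (Finset.le_sup_iff (by omega : (0:ℕ) < j)).1 h2
    obtain ⟨heE, hei⟩ := Finset.mem_filter.1 he
    exact hE.2 e heE (i, j) ⟨by omega, hij, hje⟩
  · intro h
    have : j ≤ (E.filter fun e => e.1 = i).sup fun e => e.2 :=
      Finset.le_sup (s := E.filter fun e => e.1 = i) (f := fun e => e.2) (Finset.mem_filter.2 ⟨h, rfl⟩)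
    omega

lemma bG_mono {N : ℕ} {E : Finset (ℕ × ℕ)} (hE : IsDCGraph N E) {i : ℕ} (hi : 1 ≤ i) :
    bG E i ≤ bG E (i + 1) := by
  rcases le_or_gt (bG E i) (i + 1) with h | h
  · exact h.trans (bG_ge (by omega))
  · have hm : (i, bG E i) ∈ E := (bG_iff hE hi (by omega)).1 le_rfl
    have : (i + 1, bG E i) ∈ E := hE.2 _ hm _ ⟨by omega, by omega, le_rfl⟩
    exact (bG_iff hE (by omega) (by omega)).2 this

lemma sum_Icc_one {M : Type*} [AddCommMonoid M] (n : ℕ) (f : ℕ → M) :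
    ∑ j ∈ Finset.Icc 1 n, f j = ∑ k ∈ Finset.range n, f (k + 1) := by
  rw [show Finset.Icc 1 n = Finset.Ico 1 (n+1) by rw [Finset.Ico_add_one_right_eq_Icc],
    Finset.sum_Ico_eq_sum_range]
  simp [add_comm]

-- ### greedy construction of a tuple realizing the DC graph E

def Lmin (E : Finset (ℕ × ℕ)) (j : ℕ) : ℕ :=
  if h : ((Finset.range j).filter fun i => (i, j) ∈ E).Nonempty
  then (((Finset.range j).filter fun i => (i, j) ∈ E)).min' h else j

lemma Lmin_le {E : Finset (ℕ × ℕ)} (j : ℕ) : Lmin E j ≤ j := by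
  unfold Lmin; split
  · next h => have := Finset.min'_mem _ h
              have := (Finset.mem_filter.1 this).1
              simp only [Finset.mem_range] at this; omega
  · exact le_rfl

lemma Lmin_mem {E : Finset (ℕ × ℕ)} {j : ℕ} (h : Lmin E j ≠ j) :
    (Lmin E j, j) ∈ E ∧ Lmin E j < j := by
  by_cases hne : ((Finset.range j).filter fun i => (i, j) ∈ E).Nonempty
  · have hm := Finset.min'_mem _ hne
    rw [Finset.mem_filter, Finset.mem_range] at hm
    unfold Lmin
    rw [dif_pos hne]
    exact ⟨hm.2, hm.1⟩
  · exfalso; apply h; unfold Lmin; rw [dif_neg hne]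

lemma Lmin_min {E : Finset (ℕ × ℕ)} {i j : ℕ} (h : (i, j) ∈ E) (hij : i < j) :
    Lmin E j ≤ i := by
  have hne : ((Finset.range j).filter fun i => (i, j) ∈ E).Nonempty :=
    ⟨i, Finset.mem_filter.2 ⟨Finset.mem_range.2 hij, h⟩⟩
  unfold Lmin; rw [dif_pos hne]
  exact Finset.min'_le _ _ (Finset.mem_filter.2 ⟨Finset.mem_range.2 hij, h⟩)

lemma edge_iff_Lmin {N : ℕ} {E : Finset (ℕ × ℕ)} (hE : IsDCGraph N E) {i j : ℕ}
    (hij : i < j) : (i, j) ∈ E ↔ Lmin E j ≤ i ∧ Lmin E j ≠ j := by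
  constructor
  · intro h
    have h1 := Lmin_min h hij
    exact ⟨h1, by omega⟩
  · rintro ⟨h1, h2⟩
    obtain ⟨hm, hlt⟩ := Lmin_mem h2
    exact hE.2 _ hm _ ⟨h1, hij, le_rfl⟩

noncomputable def sg (E : Finset (ℕ × ℕ)) : ℕ → ℝ
  | 0 => 0
  | 1 => 1
  | (j+2) =>
    if Lmin E (j+2) = j+2 then sg E (j+1) + 2
    else (max (sg E (j+1)) (sg E (min (Lmin E (j+2)) (j+1) - 1) + 1)
          + (sg E (min (Lmin E (j+2)) (j+1)) + 1)) / 2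
  decreasing_by all_goals omega

lemma sg_zero (E : Finset (ℕ × ℕ)) : sg E 0 = 0 := by rw [sg]
lemma sg_one (E : Finset (ℕ × ℕ)) : sg E 1 = 1 := by rw [sg]
lemma sg_succ (E : Finset (ℕ × ℕ)) (m : ℕ) :
    sg E (m+2) = if Lmin E (m+2) = m+2 then sg E (m+1) + 2
    else (max (sg E (m+1)) (sg E (min (Lmin E (m+2)) (m+1) - 1) + 1)
          + (sg E (min (Lmin E (m+2)) (m+1)) + 1)) / 2 := by
  rw [sg]

lemma sg_main {N : ℕ} {E : Finset (ℕ × ℕ)} (hE : IsDCGraph N E) :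
    ∀ j, 1 ≤ j → (∀ i, i < j → sg E i < sg E j) ∧
      (∀ i, 1 ≤ i → i < j → ((i, j) ∈ E → sg E j - sg E i < 1) ∧
        ((i, j) ∉ E → 1 < sg E j - sg E i)) := by
  intro j
  induction j using Nat.strong_induction_on with
  | _ j IH =>
    intro hj
    match j, hj with
    | 1, _ =>
      refine ⟨fun i hi => ?_, fun i h1 h2 => by omega⟩
      interval_cases i
      rw [sg_zero, sg_one]; norm_num
    | (m+2), _ =>
      set j := m + 2 with hjdef
      have hmono : ∀ i i', i < i' → i' ≤ m + 1 → sg E i < sg E i' := by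
        intro i i' hii hi'
        exact (IH i' (by omega) (by omega)).1 i hii
      have hmono_le : ∀ i i', i ≤ i' → i' ≤ m + 1 → sg E i ≤ sg E i' := by
        intro i i' hii hi'
        rcases eq_or_lt_of_le hii with h | h
        · rw [h]
        · exact (hmono i i' h hi').le
      by_cases hL : Lmin E j = j
      · -- no in-edges
        have hsg : sg E j = sg E (m+1) + 2 := by
          rw [show j = m + 2 from rfl, sg_succ, if_pos hL]
        have noedge : ∀ i, i < j → (i, j) ∉ E := by
          intro i hi hmem
          have := Lmin_min hmem hi; omega
        constructor
        · intro i hi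
          have : sg E i ≤ sg E (m+1) := hmono_le i (m+1) (by omega) le_rfl
          rw [hsg]; linarith
        · intro i h1 h2
          refine ⟨fun hmem => absurd hmem (noedge i h2), fun _ => ?_⟩
          have : sg E i ≤ sg E (m+1) := hmono_le i (m+1) (by omega) le_rfl
          rw [hsg]; linarith
      · -- L < j, (L, j) ∈ E
        obtain ⟨hLE, hLlt⟩ := Lmin_mem hL
        set L := Lmin E j with hLdef
        have hL1 : 1 ≤ L := (mem_ENfin'.1 (hE.1 hLE)).1
        have hmin : min L (m+1) = L := by omega
        have hsg : sg E j = (max (sg E (m+1)) (sg E (L-1) + 1) + (sg E L + 1)) / 2 := by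
          rw [show j = m + 2 from rfl, sg_succ, if_neg hL]
          rw [show Lmin E (m+2) = L from rfl, hmin]
        have h1 : sg E (L-1) + 1 < sg E L + 1 := by
          have := hmono (L-1) L (by omega) (by omega); linarith
        have h2 : sg E (m+1) < sg E L + 1 := by
          rcases eq_or_lt_of_le (show L ≤ m + 1 by omega) with h | h
          · rw [h]; linarith
          · have hedge : (L, m+1) ∈ E := hE.2 _ hLE _ ⟨le_rfl, h, by omega⟩
            have := ((IH (m+1) (by omega) (by omega)).2 L hL1 h).1 hedge
            linarith
        have hmaxlt : max (sg E (m+1)) (sg E (L-1) + 1) < sg E L + 1 := max_lt h2 h1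
        have hup : sg E j < sg E L + 1 := by rw [hsg]; linarith [le_max_left (sg E (m+1)) (sg E (L-1) + 1)]
        have hlow : max (sg E (m+1)) (sg E (L-1) + 1) < sg E j := by rw [hsg]; linarith
        have hlow1 : sg E (m+1) < sg E j :=
          lt_of_le_of_lt (le_max_left _ _) hlow
        have hlow2 : sg E (L-1) + 1 < sg E j :=
          lt_of_le_of_lt (le_max_right _ _) hlow
        constructor
        · intro i hi
          exact lt_of_le_of_lt (hmono_le i (m+1) (by omega) le_rfl) hlow1
        · intro i hi1 hi2
          constructor
          · intro hmem
            have hLi : L ≤ i := Lmin_min hmem hi2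
            have : sg E L ≤ sg E i := hmono_le L i hLi (by omega)
            linarith
          · intro hmem
            have hiL : i < L := by
              by_contra h
              exact hmem ((edge_iff_Lmin hE hi2).2 ⟨by omega, hL⟩)
            have : sg E i ≤ sg E (L-1) := hmono_le i (L-1) (by omega) (by omega)
            linarith

-- ### matrix machinery
open Matrix

noncomputable def Mmat (N : ℕ) (E : Finset (ℕ × ℕ)) (p : ℕ → ℝ) : Matrix (Fin N) (Fin N) ℝ :=
  fun i k => (if k = i then qq p (bG E ((i:ℕ)+1)) else 0)
    + (if (k:ℕ) = 0 then qq p (bG E ((i:ℕ)+1)) else 0)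
    - (if (k:ℕ)+1 ≤ bG E ((i:ℕ)+1) then p ((k:ℕ)+1) else 0)

def sOf (N : ℕ) (v : Fin N → ℝ) (k : ℕ) : ℝ :=
  if h : 1 ≤ k ∧ k ≤ N then v ⟨k-1, by omega⟩ else 0

def avec (N : ℕ) (a : ℕ → ℝ) : Fin N → ℝ := fun i => a ((i:ℕ)+1)

noncomputable def sFun (N : ℕ) (E : Finset (ℕ × ℕ)) (ap : (ℕ → ℝ) × (ℕ → ℝ)) : Fin N → ℝ :=
  ((Mmat N E ap.2).det)⁻¹ • ((Mmat N E ap.2).adjugate *ᵥ avec N ap.1)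

lemma sOf_eq {N : ℕ} (v : Fin N → ℝ) {k : ℕ} (h1 : 1 ≤ k) (h2 : k ≤ N) :
    sOf N v k = v ⟨k-1, by omega⟩ := by
  rw [sOf, dif_pos ⟨h1, h2⟩]

lemma sOf_fin {N : ℕ} (v : Fin N → ℝ) (i : Fin N) : sOf N v ((i:ℕ)+1) = v i := by
  rw [sOf_eq v (by omega) (by omega)]
  exact congrArg v (Fin.ext (by simp))

lemma mulVec_Mmat {N : ℕ} {E : Finset (ℕ × ℕ)} (p : ℕ → ℝ) (v : Fin N → ℝ) (i : Fin N)
    (hb : bG E ((i:ℕ)+1) ≤ N) :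
    (Mmat N E p *ᵥ v) i
      = ∑ j ∈ Finset.Icc 1 (bG E ((i:ℕ)+1)),
          p j * (sOf N v ((i:ℕ)+1) - sOf N v j + sOf N v 1) := by
  have hN : 0 < N := i.pos
  set b := bG E ((i:ℕ)+1) with hbdef
  have key : ∀ k : Fin N, Mmat N E p i k * v k
      = (if k = i then qq p b * v i else 0) + (if k = ⟨0, hN⟩ then qq p b * v ⟨0, hN⟩ else 0)
        - (if (k:ℕ)+1 ≤ b then p ((k:ℕ)+1) * sOf N v ((k:ℕ)+1) else 0) := by
    intro k
    have h0 : Mmat N E p i k = (if k = i then qq p b else 0) + (if (k:ℕ) = 0 then qq p b else 0)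
        - (if (k:ℕ)+1 ≤ b then p ((k:ℕ)+1) else 0) := rfl
    have hk0 : ((k:ℕ) = 0) ↔ (k = ⟨0, hN⟩) := by simp [Fin.ext_iff]
    rw [h0, sOf_fin]
    simp only [hk0]
    split_ifs with h1 h2 h3 <;> simp_all <;> ring
  have expand : (Mmat N E p *ᵥ v) i = ∑ k : Fin N, Mmat N E p i k * v k := rfl
  have hS : sOf N v 1 = v ⟨0, hN⟩ := by rw [sOf_eq v le_rfl (by omega)]
  have hA : sOf N v ((i:ℕ)+1) = v i := sOf_fin v i
  have e3 : ∑ k : Fin N, (if (k:ℕ)+1 ≤ b then p ((k:ℕ)+1) * sOf N v ((k:ℕ)+1) else 0)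
      = ∑ j ∈ Finset.Icc 1 b, p j * sOf N v j := by
    rw [Fin.sum_univ_eq_sum_range (fun k => if k+1 ≤ b then p (k+1) * sOf N v (k+1) else 0) N]
    rw [← Finset.sum_filter]
    rw [show (Finset.range N).filter (fun k => k+1 ≤ b) = Finset.range b from by
      ext k; simp only [Finset.mem_range, Finset.mem_filter]; omega]
    rw [sum_Icc_one]
  rw [expand]
  calc ∑ k : Fin N, Mmat N E p i k * v k
      = ∑ k : Fin N, ((if k = i then qq p b * v i else 0)
          + (if k = ⟨0, hN⟩ then qq p b * v ⟨0, hN⟩ else 0)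
          - (if (k:ℕ)+1 ≤ b then p ((k:ℕ)+1) * sOf N v ((k:ℕ)+1) else 0)) :=
        Finset.sum_congr rfl fun k _ => key k
    _ = (∑ k : Fin N, if k = i then qq p b * v i else 0)
        + (∑ k : Fin N, if k = ⟨0, hN⟩ then qq p b * v ⟨0, hN⟩ else 0)
        - ∑ k : Fin N, (if (k:ℕ)+1 ≤ b then p ((k:ℕ)+1) * sOf N v ((k:ℕ)+1) else 0) := by
        rw [Finset.sum_sub_distrib, Finset.sum_add_distrib]
    _ = qq p b * v i + qq p b * v ⟨0, hN⟩ - ∑ j ∈ Finset.Icc 1 b, p j * sOf N v j := by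
        rw [e3]; simp
    _ = ∑ j ∈ Finset.Icc 1 b, p j * (sOf N v ((i:ℕ)+1) - sOf N v j + sOf N v 1) := by
        rw [Finset.sum_congr rfl (fun j _ => show
            p j * (sOf N v ((i:ℕ)+1) - sOf N v j + sOf N v 1)
              = p j * (v i + v ⟨0, hN⟩) - p j * sOf N v j from by rw [hA, hS]; ring)]
        rw [Finset.sum_sub_distrib, ← Finset.sum_mul,
          show ∑ j ∈ Finset.Icc 1 b, p j = qq p b from rfl]
        ring

-- ### determinant of Mmat at p ≡ 1

lemma qq_one (k : ℕ) : qq (fun _ => (1:ℝ)) k = k := by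
  simp [qq]

lemma det_Mmat_ne_zero {N : ℕ} {E : Finset (ℕ × ℕ)} (hN : 1 ≤ N) (hE : IsDCGraph N E) :
    (Mmat N E (fun _ => (1:ℝ))).det ≠ 0 := by
  intro h0
  obtain ⟨v, hv0, hMv⟩ := Matrix.exists_mulVec_eq_zero_iff.2 h0
  have hNpos : 0 < N := hN
  set c : ℝ := v ⟨0, hNpos⟩ with hc
  have key : ∀ i : Fin N, (bG E ((i:ℕ)+1) : ℝ) * (v i + c)
      = ∑ j ∈ Finset.Icc 1 (bG E ((i:ℕ)+1)), sOf N v j := by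
    intro i
    have hble : bG E ((i:ℕ)+1) ≤ N := bG_le hE (by omega) (by omega)
    have hh := mulVec_Mmat (E := E) (fun _ => (1:ℝ)) v i hble
    rw [hMv] at hh
    have hA : sOf N v ((i:ℕ)+1) = v i := sOf_fin v i
    have hS : sOf N v 1 = c := by rw [sOf_eq v le_rfl (by omega)]
    have h2 : (0:ℝ) = ∑ j ∈ Finset.Icc 1 (bG E ((i:ℕ)+1)),
        ((v i + c) - sOf N v j) := by
      rw [show (0:ℝ) = (0 : Fin N → ℝ) i from rfl, hh]
      exact Finset.sum_congr rfl fun j _ => by rw [hA, hS]; ring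
    rw [Finset.sum_sub_distrib, Finset.sum_const, Nat.card_Icc] at h2
    simp only [Nat.add_sub_cancel, nsmul_eq_mul] at h2
    linarith
  have hble : ∀ i : Fin N, bG E ((i:ℕ)+1) ≤ N := fun i => bG_le hE (by omega) (by omega)
  have hbg : ∀ i : Fin N, ((i:ℕ)+1) ≤ bG E ((i:ℕ)+1) := fun i => bG_ge (by omega)
  obtain ⟨imax, -, hmax⟩ := Finset.exists_max_image Finset.univ v ⟨⟨0, hNpos⟩, Finset.mem_univ _⟩
  obtain ⟨imin, -, hmin⟩ := Finset.exists_min_image Finset.univ v ⟨⟨0, hNpos⟩, Finset.mem_univ _⟩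
  have hwle : ∀ j, 1 ≤ j → j ≤ N → sOf N v j ≤ v imax := fun j h1 h2 => by
    rw [sOf_eq v h1 h2]; exact hmax _ (Finset.mem_univ _)
  have hwge : ∀ j, 1 ≤ j → j ≤ N → v imin ≤ sOf N v j := fun j h1 h2 => by
    rw [sOf_eq v h1 h2]; exact hmin _ (Finset.mem_univ _)
  -- bounds on sums
  have hsum_ub : ∀ i : Fin N, ∑ j ∈ Finset.Icc 1 (bG E ((i:ℕ)+1)), sOf N v j
      ≤ (bG E ((i:ℕ)+1) : ℝ) * v imax := by
    intro i
    calc ∑ j ∈ Finset.Icc 1 (bG E ((i:ℕ)+1)), sOf N v j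
        ≤ ∑ j ∈ Finset.Icc 1 (bG E ((i:ℕ)+1)), v imax := by
          refine Finset.sum_le_sum fun j hj => ?_
          rw [Finset.mem_Icc] at hj
          exact hwle j hj.1 (hj.2.trans (hble i))
      _ = (bG E ((i:ℕ)+1) : ℝ) * v imax := by
          rw [Finset.sum_const, Nat.card_Icc]; simp [nsmul_eq_mul]
  have hsum_lb : ∀ i : Fin N, (bG E ((i:ℕ)+1) : ℝ) * v imin
      ≤ ∑ j ∈ Finset.Icc 1 (bG E ((i:ℕ)+1)), sOf N v j := by
    intro i
    calc (bG E ((i:ℕ)+1) : ℝ) * v imin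
        = ∑ j ∈ Finset.Icc 1 (bG E ((i:ℕ)+1)), v imin := by
          rw [Finset.sum_const, Nat.card_Icc]; simp [nsmul_eq_mul]
      _ ≤ _ := by
          refine Finset.sum_le_sum fun j hj => ?_
          rw [Finset.mem_Icc] at hj
          exact hwge j hj.1 (hj.2.trans (hble i))
  have hbpos : ∀ i : Fin N, (0:ℝ) < (bG E ((i:ℕ)+1) : ℝ) := fun i => by
    have h := hbg i
    have h2 : 0 < bG E ((i:ℕ)+1) := by omega
    exact_mod_cast h2
  -- c = 0
  have hc0 : c = 0 := by
    have h1 : (bG E ((imax:ℕ)+1) : ℝ) * (v imax + c) ≤ (bG E ((imax:ℕ)+1) : ℝ) * v imax := by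
      rw [key imax]; exact hsum_ub imax
    have h2 : (bG E ((imin:ℕ)+1) : ℝ) * v imin ≤ (bG E ((imin:ℕ)+1) : ℝ) * (v imin + c) := by
      rw [key imin]; exact hsum_lb imin
    have hb1 := hbpos imax
    have hb2 := hbpos imin
    nlinarith
  -- max is 0
  have hmax0 : v imax = 0 := by
    have heq : ∑ j ∈ Finset.Icc 1 (bG E ((imax:ℕ)+1)), (v imax - sOf N v j) = 0 := by
      rw [Finset.sum_sub_distrib, Finset.sum_const, Nat.card_Icc]
      have := key imax
      rw [hc0, add_zero] at this
      simp only [Nat.add_sub_cancel, nsmul_eq_mul]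
      linarith
    have hall := (Finset.sum_eq_zero_iff_of_nonneg fun j hj => by
      rw [Finset.mem_Icc] at hj
      have := hwle j hj.1 (hj.2.trans (hble imax))
      linarith).1 heq
    have h1mem : (1:ℕ) ∈ Finset.Icc 1 (bG E ((imax:ℕ)+1)) := by
      rw [Finset.mem_Icc]; exact ⟨le_rfl, by have := hbg imax; omega⟩
    have := hall 1 h1mem
    have hS : sOf N v 1 = c := by rw [sOf_eq v le_rfl (by omega)]
    rw [hS, hc0] at this
    linarith
  have hmin0 : v imin = 0 := by
    have heq : ∑ j ∈ Finset.Icc 1 (bG E ((imin:ℕ)+1)), (sOf N v j - v imin) = 0 := by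
      rw [Finset.sum_sub_distrib, Finset.sum_const, Nat.card_Icc]
      have := key imin
      rw [hc0, add_zero] at this
      simp only [Nat.add_sub_cancel, nsmul_eq_mul]
      linarith
    have hall := (Finset.sum_eq_zero_iff_of_nonneg fun j hj => by
      rw [Finset.mem_Icc] at hj
      have := hwge j hj.1 (hj.2.trans (hble imin))
      linarith).1 heq
    have h1mem : (1:ℕ) ∈ Finset.Icc 1 (bG E ((imin:ℕ)+1)) := by
      rw [Finset.mem_Icc]; exact ⟨le_rfl, by have := hbg imin; omega⟩
    have := hall 1 h1mem
    have hS : sOf N v 1 = c := by rw [sOf_eq v le_rfl (by omega)]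
    rw [hS, hc0] at this
    linarith
  apply hv0
  funext k
  have h1 := hmax k (Finset.mem_univ _)
  have h2 := hmin k (Finset.mem_univ _)
  have : v k = 0 := le_antisymm (by rw [← hmax0]; exact h1) (by rw [← hmin0]; exact h2)
  simpa using this

-- ### the base point

noncomputable def abase (N : ℕ) (E : Finset (ℕ × ℕ)) : ℕ → ℝ :=
  fun i => ∑ j ∈ Finset.Icc 1 (bG E i), (sg E i - sg E j + sg E 1)

noncomputable def vbase (N : ℕ) (E : Finset (ℕ × ℕ)) : Fin N → ℝ := fun k => sg E ((k:ℕ)+1)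

lemma sOf_vbase {N : ℕ} (E : Finset (ℕ × ℕ)) {j : ℕ} (h1 : 1 ≤ j) (h2 : j ≤ N) :
    sOf N (vbase N E) j = sg E j := by
  rw [sOf_eq _ h1 h2]
  show sg E ((j-1)+1) = sg E j
  congr 1
  omega

lemma Mmat_vbase {N : ℕ} {E : Finset (ℕ × ℕ)} (hN : 1 ≤ N) (hE : IsDCGraph N E) :
    Mmat N E (fun _ => (1:ℝ)) *ᵥ vbase N E = avec N (abase N E) := by
  funext i
  have hble : bG E ((i:ℕ)+1) ≤ N := bG_le hE (by omega) (by omega)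
  rw [mulVec_Mmat _ _ i hble]
  show _ = abase N E ((i:ℕ)+1)
  rw [abase]
  refine Finset.sum_congr rfl fun j hj => ?_
  rw [Finset.mem_Icc] at hj
  rw [one_mul, sOf_vbase E hj.1 (hj.2.trans hble), sOf_vbase E (by omega) (by omega),
    sOf_vbase E le_rfl (by omega)]

lemma sFun_base {N : ℕ} {E : Finset (ℕ × ℕ)} (hN : 1 ≤ N) (hE : IsDCGraph N E) :
    sFun N E (abase N E, fun _ => (1:ℝ)) = vbase N E := by
  have hdet := det_Mmat_ne_zero hN hE
  rw [sFun]
  show ((Mmat N E (fun _ => (1:ℝ))).det)⁻¹ •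
      ((Mmat N E (fun _ => (1:ℝ))).adjugate *ᵥ avec N (abase N E)) = _
  rw [← Mmat_vbase hN hE, Matrix.mulVec_mulVec, Matrix.adjugate_mul,
    Matrix.smul_mulVec, Matrix.one_mulVec, smul_smul,
    inv_mul_cancel₀ hdet, one_smul]

lemma sg_term_pos {N : ℕ} {E : Finset (ℕ × ℕ)} (hE : IsDCGraph N E) {i j : ℕ}
    (hi : 1 ≤ i) (hj : 1 ≤ j) (hjb : j ≤ bG E i) : 0 < sg E i - sg E j + sg E 1 := by
  rw [sg_one]
  rcases le_or_gt j i with h | h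
  · have : sg E j ≤ sg E i := by
      rcases eq_or_lt_of_le h with h' | h'
      · rw [h']
      · exact ((sg_main hE i hi).1 j h').le
    linarith
  · have hedge : (i, j) ∈ E := (bG_iff hE hi h).1 hjb
    have := ((sg_main hE j (by omega)).2 i hi h).1 hedge
    linarith

lemma abase_one_pos {N : ℕ} {E : Finset (ℕ × ℕ)} (hN : 1 ≤ N) (hE : IsDCGraph N E) :
    0 < abase N E 1 := by
  rw [abase]
  refine Finset.sum_pos (fun j hj => ?_) ⟨1, Finset.mem_Icc.2 ⟨le_rfl, bG_ge le_rfl⟩⟩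
  rw [Finset.mem_Icc] at hj
  exact sg_term_pos hE le_rfl hj.1 hj.2

lemma abase_mono {N : ℕ} {E : Finset (ℕ × ℕ)} (hE : IsDCGraph N E) {i : ℕ}
    (h1 : 1 ≤ i) (h2 : i < N) : abase N E i < abase N E (i+1) := by
  rw [abase, abase]
  have hmono : bG E i ≤ bG E (i+1) := bG_mono hE h1
  have step1 : ∑ j ∈ Finset.Icc 1 (bG E i), (sg E (i+1) - sg E j + sg E 1)
      ≤ ∑ j ∈ Finset.Icc 1 (bG E (i+1)), (sg E (i+1) - sg E j + sg E 1) := by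
    refine Finset.sum_le_sum_of_subset_of_nonneg (Finset.Icc_subset_Icc_right hmono)
      (fun j hj _ => ?_)
    rw [Finset.mem_Icc] at hj
    exact (sg_term_pos hE (by omega) hj.1 hj.2).le
  have step2 : ∑ j ∈ Finset.Icc 1 (bG E i), (sg E i - sg E j + sg E 1)
      < ∑ j ∈ Finset.Icc 1 (bG E i), (sg E (i+1) - sg E j + sg E 1) := by
    refine Finset.sum_lt_sum_of_nonempty ⟨1, Finset.mem_Icc.2 ⟨le_rfl, le_trans h1 (bG_ge h1)⟩⟩
      (fun j hj => ?_)
    have := (sg_main hE (i+1) (by omega)).1 i (by omega)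
    linarith
  linarith


def Cond (N : ℕ) (E : Finset (ℕ × ℕ)) (ap : (ℕ → ℝ) × (ℕ → ℝ)) : Prop :=
  IsParam N ap.1 ap.2 ∧ (Mmat N E ap.2).det ≠ 0 ∧
  0 < sOf N (sFun N E ap) 1 ∧
  ∀ e ∈ ENfin N,
    (sOf N (sFun N E ap) e.1 < sOf N (sFun N E ap) e.2) ∧
    (e ∈ E → sOf N (sFun N E ap) e.2 - sOf N (sFun N E ap) e.1 < sOf N (sFun N E ap) 1) ∧
    (e ∉ E → sOf N (sFun N E ap) 1 < sOf N (sFun N E ap) e.2 - sOf N (sFun N E ap) e.1)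

lemma cond_base {N : ℕ} {E : Finset (ℕ × ℕ)} (hN : 1 ≤ N) (hE : IsDCGraph N E) :
    Cond N E (abase N E, fun _ => (1:ℝ)) := by
  have hsf : sFun N E (abase N E, fun _ => (1:ℝ)) = vbase N E := sFun_base hN hE
  refine ⟨⟨abase_one_pos hN hE, fun i h1 h2 => abase_mono hE h1 h2,
    fun i _ _ => one_pos⟩, det_Mmat_ne_zero hN hE, ?_, ?_⟩
  · rw [hsf, sOf_vbase E le_rfl hN, sg_one]; norm_num
  · intro e he
    obtain ⟨i, j⟩ := e
    obtain ⟨h1, h2, h3⟩ := mem_ENfin'.1 he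
    simp only at h1 h2 h3
    rw [hsf, sOf_vbase E h1 (by omega), sOf_vbase E (by omega) h3, sOf_vbase E le_rfl hN]
    obtain ⟨hm, hc⟩ := sg_main hE j (by omega)
    refine ⟨hm i h2, fun hmem => ?_, fun hmem => ?_⟩
    · rw [sg_one]; exact (hc i h1 h2).1 hmem
    · rw [sg_one]; exact (hc i h1 h2).2 hmem

lemma cond_mem {N : ℕ} {E : Finset (ℕ × ℕ)} (hN : 1 ≤ N) (hE : IsDCGraph N E)
    {ap : (ℕ → ℝ) × (ℕ → ℝ)} (h : Cond N E ap) : ap ∈ PGset N E := by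
  obtain ⟨hP, hdet, hpos, hcond⟩ := h
  set v : Fin N → ℝ := sFun N E ap with hv
  set s : ℕ → ℝ := fun k => sOf N v k with hs
  have hMv : Mmat N E ap.2 *ᵥ v = avec N ap.1 := by
    rw [hv, sFun, Matrix.mulVec_smul, Matrix.mulVec_mulVec, Matrix.mul_adjugate,
      Matrix.smul_mulVec, Matrix.one_mulVec, smul_smul, inv_mul_cancel₀ hdet, one_smul]
  have hmono_le : ∀ i j, 1 ≤ i → i ≤ j → j ≤ N → s i ≤ s j := by
    intro i j h1 h2 h3
    rcases eq_or_lt_of_le h2 with h' | h'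
    · rw [h']
    · exact ((hcond (i, j) (mem_ENfin'.2 ⟨h1, h', h3⟩)).1).le
  refine ⟨hP, s, ⟨hpos, fun i h1 h2 => (hcond (i, i+1)
      (mem_ENfin'.2 ⟨h1, by omega, by omega⟩)).1, fun i h1 h2 => ?_⟩, ?_⟩
  · -- stationarity equation
    set ii : Fin N := ⟨i - 1, by omega⟩ with hii
    have hi1 : (ii : ℕ) + 1 = i := by simp [hii]; omega
    have hble : bG E i ≤ N := bG_le hE h1 h2
    have hbge : i ≤ bG E i := bG_ge h1
    have heq := congrFun hMv ii
    rw [mulVec_Mmat _ _ ii (by rw [hi1]; exact hble)] at heq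
    rw [hi1] at heq
    have havec : avec N ap.1 ii = ap.1 i := by
      show ap.1 ((ii:ℕ)+1) = ap.1 i
      rw [hi1]
    have ha : ap.1 i = ∑ j ∈ Finset.Icc 1 (bG E i),
        ap.2 j * (sOf N v i - sOf N v j + sOf N v 1) := by
      rw [← havec, ← heq]
    have hzero : ∀ j ∈ Finset.Icc 1 N, j ∉ Finset.Icc 1 (bG E i) →
        ap.2 j * pos' (s i - s j + s 1) = 0 := by
      intro j hj hnj
      rw [Finset.mem_Icc] at hj hnj
      have hij : i < j := by omega
      have hnedge : (i, j) ∉ E := fun hmem => by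
        have := (bG_iff hE h1 hij).2 hmem; omega
      have := (hcond (i, j) (mem_ENfin'.2 ⟨h1, hij, hj.2⟩)).2.2 hnedge
      have harg : s i - s j + s 1 < 0 := by
        show sOf N v i - sOf N v j + sOf N v 1 < 0
        simp only at this
        linarith
      rw [pos', max_eq_right harg.le, mul_zero]
    show ap.1 i = ∑ j ∈ Finset.Icc 1 N, ap.2 j * pos' (sOf N v i - sOf N v j + sOf N v 1)
    rw [ha, ← Finset.sum_subset (Finset.Icc_subset_Icc_right hble) hzero]
    refine Finset.sum_congr rfl fun j hj => ?_
    rw [Finset.mem_Icc] at hj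
    have hargpos : 0 < sOf N v i - sOf N v j + sOf N v 1 := by
      rcases le_or_gt j i with hji | hji
      · have h5 := hmono_le j i hj.1 hji h2
        replace h5 : sOf N v j ≤ sOf N v i := h5
        have h6 : (0:ℝ) < sOf N v 1 := hpos
        linarith
      · have hedge : (i, j) ∈ E := (bG_iff hE h1 hji).1 hj.2
        have := (hcond (i, j) (mem_ENfin'.2 ⟨h1, hji, hj.2.trans hble⟩)).2.1 hedge
        simp only at this
        linarith
    show ap.2 j * (sOf N v i - sOf N v j + sOf N v 1) = ap.2 j * pos' (sOf N v i - sOf N v j + sOf N v 1)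
    rw [pos', max_eq_left hargpos.le]
  · -- GrEdges = E
    ext e
    simp only [GrEdges, Finset.mem_filter]
    constructor
    · rintro ⟨he, hlt⟩
      by_contra hne
      have := (hcond e he).2.2 hne
      linarith
    · intro he
      have heN : e ∈ ENfin N := hE.1 he
      exact ⟨heN, (hcond e heN).2.1 he⟩

-- ### continuity and final assembly

lemma cont_Mmat (N : ℕ) (E : Finset (ℕ × ℕ)) :
    Continuous fun ap : (ℕ → ℝ) × (ℕ → ℝ) => Mmat N E ap.2 := by
  apply continuous_matrix
  intro i k
  have hq : ∀ b : ℕ, Continuous fun ap : (ℕ → ℝ) × (ℕ → ℝ) => qq ap.2 b := by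
    intro b
    simp only [qq]
    exact continuous_finset_sum _ fun j _ => (continuous_apply j).comp continuous_snd
  show Continuous fun ap : (ℕ → ℝ) × (ℕ → ℝ) =>
    (if k = i then qq ap.2 (bG E ((i:ℕ)+1)) else 0)
    + (if (k:ℕ) = 0 then qq ap.2 (bG E ((i:ℕ)+1)) else 0)
    - (if (k:ℕ)+1 ≤ bG E ((i:ℕ)+1) then ap.2 ((k:ℕ)+1) else 0)
  refine Continuous.sub (Continuous.add ?_ ?_) ?_
  · by_cases h : k = i
    · simp only [if_pos h]; exact hq _
    · simp only [if_neg h]; exact continuous_const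
  · by_cases h : (k:ℕ) = 0
    · simp only [if_pos h]; exact hq _
    · simp only [if_neg h]; exact continuous_const
  · by_cases h : (k:ℕ)+1 ≤ bG E ((i:ℕ)+1)
    · simp only [if_pos h]; exact (continuous_apply _).comp continuous_snd
    · simp only [if_neg h]; exact continuous_const

lemma contAt_sOf_sFun {N : ℕ} {E : Finset (ℕ × ℕ)} (j : ℕ)
    {x₀ : (ℕ → ℝ) × (ℕ → ℝ)} (hdet : (Mmat N E x₀.2).det ≠ 0) :
    ContinuousAt (fun ap => sOf N (sFun N E ap) j) x₀ := by
  by_cases h : 1 ≤ j ∧ j ≤ N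
  · have heq : (fun ap => sOf N (sFun N E ap) j)
        = fun ap : (ℕ → ℝ) × (ℕ → ℝ) => ((Mmat N E ap.2).det)⁻¹
            * ((Mmat N E ap.2).adjugate *ᵥ avec N ap.1) ⟨j-1, by omega⟩ := by
      funext ap
      rw [sOf, dif_pos h]
      rfl
    rw [heq]
    have hdetc : Continuous fun ap : (ℕ → ℝ) × (ℕ → ℝ) => (Mmat N E ap.2).det :=
      (cont_Mmat N E).matrix_det
    have hadjc : Continuous fun ap : (ℕ → ℝ) × (ℕ → ℝ) => (Mmat N E ap.2).adjugate :=
      (cont_Mmat N E).matrix_adjugate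
    refine ContinuousAt.mul (hdetc.continuousAt.inv₀ hdet) ?_
    have heq2 : (fun ap : (ℕ → ℝ) × (ℕ → ℝ) =>
        ((Mmat N E ap.2).adjugate *ᵥ avec N ap.1) (⟨j-1, by omega⟩ : Fin N))
        = fun ap => ∑ l : Fin N, (Mmat N E ap.2).adjugate ⟨j-1, by omega⟩ l
            * ap.1 ((l:ℕ)+1) := rfl
    rw [heq2]
    apply Continuous.continuousAt
    refine continuous_finset_sum _ fun l _ => Continuous.mul ?_ ?_
    · exact (continuous_apply l).comp ((continuous_apply _).comp hadjc)
    · exact (continuous_apply _).comp continuous_fst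
  · have heq : (fun ap => sOf N (sFun N E ap) j) = fun _ : (ℕ → ℝ) × (ℕ → ℝ) => (0:ℝ) := by
      funext ap
      rw [sOf, dif_neg h]
    rw [heq]
    exact continuousAt_const


/-- each region `P_G` has non-empty interior, Theorem 4.8. -/
theorem stmt_14 (N : ℕ) (hN : 1 ≤ N) (E : Finset (ℕ × ℕ)) (hE : IsDCGraph N E) :
    (interior (PGset N E)).Nonempty := by
    classical
  set x₀ : (ℕ → ℝ) × (ℕ → ℝ) := (abase N E, fun _ => (1:ℝ)) with hx₀
  have hbase : Cond N E x₀ := cond_base hN hE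
  have hdet0 : (Mmat N E x₀.2).det ≠ 0 := det_Mmat_ne_zero hN hE
  have hdetc : Continuous fun ap : (ℕ → ℝ) × (ℕ → ℝ) => (Mmat N E ap.2).det :=
    (cont_Mmat N E).matrix_det
  have hconta : ∀ k : ℕ, Continuous fun ap : (ℕ → ℝ) × (ℕ → ℝ) => ap.1 k :=
    fun k => (continuous_apply k).comp continuous_fst
  have hcontp : ∀ k : ℕ, Continuous fun ap : (ℕ → ℝ) × (ℕ → ℝ) => ap.2 k :=
    fun k => (continuous_apply k).comp continuous_snd
  have hconts : ∀ j : ℕ, ContinuousAt (fun ap => sOf N (sFun N E ap) j) x₀ :=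
    fun j => contAt_sOf_sFun j hdet0
  -- eventually each part of Cond
  have evP : ∀ᶠ ap in 𝓝 x₀, IsParam N ap.1 ap.2 := by
    have e1 : ∀ᶠ ap in 𝓝 x₀, 0 < ap.1 1 :=
      continuousAt_const.eventually_lt (hconta 1).continuousAt hbase.1.1
    have e2 : ∀ᶠ ap in 𝓝 x₀, ∀ i ∈ Finset.Ico 1 N, ap.1 i < ap.1 (i+1) := by
      rw [Filter.eventually_all_finset]
      intro i hi
      rw [Finset.mem_Ico] at hi
      exact (hconta i).continuousAt.eventually_lt (hconta (i+1)).continuousAt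
        (hbase.1.2.1 i hi.1 hi.2)
    have e3 : ∀ᶠ ap in 𝓝 x₀, ∀ i ∈ Finset.Icc 1 N, 0 < ap.2 i := by
      rw [Filter.eventually_all_finset]
      intro i hi
      rw [Finset.mem_Icc] at hi
      exact continuousAt_const.eventually_lt (hcontp i).continuousAt
        (hbase.1.2.2 i hi.1 hi.2)
    filter_upwards [e1, e2, e3] with ap h1 h2 h3
    exact ⟨h1, fun i ha hb => h2 i (Finset.mem_Ico.2 ⟨ha, hb⟩),
      fun i ha hb => h3 i (Finset.mem_Icc.2 ⟨ha, hb⟩)⟩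
  have evD : ∀ᶠ ap in 𝓝 x₀, (Mmat N E ap.2).det ≠ 0 :=
    hdetc.continuousAt.eventually_ne hdet0
  have ev1 : ∀ᶠ ap in 𝓝 x₀, 0 < sOf N (sFun N E ap) 1 :=
    continuousAt_const.eventually_lt (hconts 1) hbase.2.2.1
  have ev2 : ∀ᶠ ap in 𝓝 x₀, ∀ e ∈ ENfin N,
      (sOf N (sFun N E ap) e.1 < sOf N (sFun N E ap) e.2) ∧
      (e ∈ E → sOf N (sFun N E ap) e.2 - sOf N (sFun N E ap) e.1 < sOf N (sFun N E ap) 1) ∧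
      (e ∉ E → sOf N (sFun N E ap) 1 < sOf N (sFun N E ap) e.2 - sOf N (sFun N E ap) e.1) := by
    rw [Filter.eventually_all_finset]
    intro e he
    obtain ⟨hb1, hb2, hb3⟩ := hbase.2.2.2 e he
    have c1 : ∀ᶠ ap in 𝓝 x₀, sOf N (sFun N E ap) e.1 < sOf N (sFun N E ap) e.2 :=
      (hconts e.1).eventually_lt (hconts e.2) hb1
    have c2 : ∀ᶠ ap in 𝓝 x₀, e ∈ E →
        sOf N (sFun N E ap) e.2 - sOf N (sFun N E ap) e.1 < sOf N (sFun N E ap) 1 := by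
      by_cases hmem : e ∈ E
      · have := ((hconts e.2).sub (hconts e.1)).eventually_lt (hconts 1) (hb2 hmem)
        filter_upwards [this] with ap h _
        exact h
      · exact Filter.Eventually.of_forall fun ap h => absurd h hmem
    have c3 : ∀ᶠ ap in 𝓝 x₀, e ∉ E →
        sOf N (sFun N E ap) 1 < sOf N (sFun N E ap) e.2 - sOf N (sFun N E ap) e.1 := by
      by_cases hmem : e ∈ E
      · exact Filter.Eventually.of_forall fun ap h => absurd hmem h
      · have := (hconts 1).eventually_lt ((hconts e.2).sub (hconts e.1)) (hb3 hmem)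
        filter_upwards [this] with ap h _
        exact h
    filter_upwards [c1, c2, c3] with ap h1 h2 h3
    exact ⟨h1, h2, h3⟩
  have ev : ∀ᶠ ap in 𝓝 x₀, ap ∈ PGset N E := by
    filter_upwards [evP, evD, ev1, ev2] with ap h1 h2 h3 h4
    exact cond_mem hN hE ⟨h1, h2, h3, h4⟩
  exact ⟨x₀, mem_interior_iff_mem_nhds.2 ev⟩
end

section
/- The map from P^{2N} to ℝ^N sending (a,p) to its unique stationary tuple s(a,p) is continuous on P^{2N}; consequently, for every i ∈ {1,...,N}, the map (a,p) ↦ z_i(a,p) := s_i(a,p) − s_{i−1}(a,p) (with s_0(a,p) := 0) is continuous on P^{2N}. -/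
open Filter Topology
open scoped Classical

section Helpers

open Filter Finset

lemma pos'_nonneg (x : ℝ) : 0 ≤ pos' x := le_max_right _ _

lemma pos'_mono : Monotone pos' := fun _ _ h => max_le_max h le_rfl

lemma pos'_of_nonneg {x : ℝ} (h : 0 ≤ x) : pos' x = x := max_eq_left h

lemma continuous_pos' : Continuous pos' := continuous_id.max continuous_const

lemma pos'_sub_le {x y : ℝ} (h : x ≤ y) : pos' y - pos' x ≤ y - x := by
  unfold pos'
  rcases le_total x 0 with h1 | h1 <;> rcases le_total y 0 with h2 | h2 <;>
    simp [max_eq_left, max_eq_right, h1, h2] <;> linarith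

lemma chain_mono {N : ℕ} {f : ℕ → ℝ} (h : ∀ i, 1 ≤ i → i < N → f i < f (i + 1)) :
    ∀ i j, 1 ≤ i → i ≤ j → j ≤ N → f i ≤ f j := by
  intro i j h1 hij hjN
  induction j with
  | zero => omega
  | succ j ih =>
    rcases Nat.lt_succ_iff_lt_or_eq.mp (Nat.lt_succ_of_le hij) with h' | h'
    · have hij' : i ≤ j := by omega
      have h1j : 1 ≤ j := le_trans h1 hij'
      exact le_trans (ih hij' (by omega)) (h j h1j (by omega)).le
    · exact h' ▸ le_rfl

lemma stat_s1_le {N : ℕ} {a p s : ℕ → ℝ} (h : IsStationaryTuple N a p s) :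
    ∀ j, 1 ≤ j → j ≤ N → s 1 ≤ s j := fun j h1 h2 => chain_mono h.2.1 1 j le_rfl h1 h2

lemma stat_upper {N : ℕ} {a p s : ℕ → ℝ} (hN : 1 ≤ N)
    (hp : ∀ j, 1 ≤ j → j ≤ N → 0 ≤ p j) (h : IsStationaryTuple N a p s) :
    ∀ i, 1 ≤ i → i ≤ N → p 1 * s i ≤ a i := by
  intro i h1 hiN
  have h1mem : (1 : ℕ) ∈ Finset.Icc 1 N := Finset.mem_Icc.mpr ⟨le_rfl, hN⟩
  have hsi : 0 ≤ s i := (lt_of_lt_of_le h.1 (stat_s1_le h i h1 hiN)).le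
  have key : p 1 * pos' (s i - s 1 + s 1) ≤ ∑ j ∈ Finset.Icc 1 N, p j * pos' (s i - s j + s 1) := by
    apply Finset.single_le_sum (f := fun j => p j * pos' (s i - s j + s 1)) _ h1mem
    intro j hj
    obtain ⟨hj1, hjN⟩ := Finset.mem_Icc.mp hj
    exact mul_nonneg (hp j hj1 hjN) (pos'_nonneg _)
  rw [sub_add_cancel, pos'_of_nonneg hsi] at key
  rw [h.2.2 i h1 hiN]
  exact key

lemma stat_lower {N : ℕ} {a p s : ℕ → ℝ} (hN : 1 ≤ N)
    (hp : ∀ j, 1 ≤ j → j ≤ N → 0 ≤ p j) (h : IsStationaryTuple N a p s) :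
    a 1 ≤ (∑ j ∈ Finset.Icc 1 N, p j) * s 1 := by
  rw [h.2.2 1 le_rfl hN, Finset.sum_mul]
  apply Finset.sum_le_sum
  intro j hj
  obtain ⟨hj1, hjN⟩ := Finset.mem_Icc.mp hj
  have h1 : s 1 - s j + s 1 ≤ s 1 := by have := stat_s1_le h j hj1 hjN; linarith
  have h2 : pos' (s 1 - s j + s 1) ≤ s 1 := by
    calc pos' (s 1 - s j + s 1) ≤ pos' (s 1) := pos'_mono h1
    _ = s 1 := pos'_of_nonneg h.1.le
  exact mul_le_mul_of_nonneg_left h2 (hp j hj1 hjN)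

lemma stat_gap {N : ℕ} {a p s : ℕ → ℝ} (hp : ∀ j, 1 ≤ j → j ≤ N → 0 ≤ p j)
    (h : IsStationaryTuple N a p s) :
    ∀ i, 1 ≤ i → i < N →
      a (i + 1) - a i ≤ (∑ j ∈ Finset.Icc 1 N, p j) * (s (i + 1) - s i) := by
  intro i h1 hiN
  rw [h.2.2 i h1 hiN.le, h.2.2 (i + 1) (by omega) hiN, ← Finset.sum_sub_distrib,
    Finset.sum_mul]
  apply Finset.sum_le_sum
  intro j hj
  obtain ⟨hj1, hjN⟩ := Finset.mem_Icc.mp hj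
  have hsle : s i ≤ s (i + 1) := (h.2.1 i h1 hiN).le
  have harg : s i - s j + s 1 ≤ s (i + 1) - s j + s 1 := by linarith
  have hlip := pos'_sub_le harg
  rw [← mul_sub]
  have : pos' (s (i + 1) - s j + s 1) - pos' (s i - s j + s 1) ≤ s (i + 1) - s i := by
    linarith
  exact mul_le_mul_of_nonneg_left this (hp j hj1 hjN)

lemma stat_le {N : ℕ} {a p s s' : ℕ → ℝ} (hN : 1 ≤ N)
    (hp : ∀ j, 1 ≤ j → j ≤ N → 0 < p j)
    (h : IsStationaryTuple N a p s) (h' : IsStationaryTuple N a p s') (h1 : s 1 ≤ s' 1) :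
    ∀ i, 1 ≤ i → i ≤ N → s' i ≤ s i := by
  by_contra hc
  push_neg at hc
  obtain ⟨i0, hi01, hi0N, hlt⟩ := hc
  obtain ⟨iM, hiMmem, hmax⟩ := Finset.exists_max_image (Finset.Icc 1 N)
    (fun i => s' i - s i) ⟨i0, Finset.mem_Icc.mpr ⟨hi01, hi0N⟩⟩
  obtain ⟨hiM1, hiMN⟩ := Finset.mem_Icc.mp hiMmem
  have hM : 0 < s' iM - s iM :=
    lt_of_lt_of_le (by linarith) (hmax i0 (Finset.mem_Icc.mpr ⟨hi01, hi0N⟩))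
  have hlt2 : (∑ j ∈ Finset.Icc 1 N, p j * pos' (s iM - s j + s 1)) <
      ∑ j ∈ Finset.Icc 1 N, p j * pos' (s' iM - s' j + s' 1) := by
    apply Finset.sum_lt_sum
    · intro j hj
      obtain ⟨hj1, hjN⟩ := Finset.mem_Icc.mp hj
      have hje := hmax j hj
      have harg : s iM - s j + s 1 ≤ s' iM - s' j + s' 1 := by
        have hje' : s' j - s j ≤ s' iM - s iM := hje; linarith
      exact mul_le_mul_of_nonneg_left (pos'_mono harg) (hp j hj1 hjN).le
    · refine ⟨1, Finset.mem_Icc.mpr ⟨le_rfl, hN⟩, ?_⟩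
      have hs1 : 0 < s iM := lt_of_lt_of_le h.1 (stat_s1_le h iM hiM1 hiMN)
      have hs1' : 0 < s' iM := lt_of_lt_of_le h'.1 (stat_s1_le h' iM hiM1 hiMN)
      have e1 : pos' (s iM - s 1 + s 1) = s iM := by rw [sub_add_cancel]; exact pos'_of_nonneg hs1.le
      have e2 : pos' (s' iM - s' 1 + s' 1) = s' iM := by
        rw [sub_add_cancel]; exact pos'_of_nonneg hs1'.le
      rw [e1, e2]
      exact mul_lt_mul_of_pos_left (by linarith) (hp 1 le_rfl hN)
  rw [← h.2.2 iM hiM1 hiMN, ← h'.2.2 iM hiM1 hiMN] at hlt2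
  exact lt_irrefl _ hlt2

lemma stat_unique {N : ℕ} {a p s s' : ℕ → ℝ} (hN : 1 ≤ N)
    (hp : ∀ j, 1 ≤ j → j ≤ N → 0 < p j)
    (h : IsStationaryTuple N a p s) (h' : IsStationaryTuple N a p s') :
    ∀ i, 1 ≤ i → i ≤ N → s i = s' i := by
  rcases le_total (s 1) (s' 1) with h1 | h1
  · have A := stat_le hN hp h h' h1
    have e1 : s' 1 = s 1 := le_antisymm (A 1 le_rfl hN) h1
    have B := stat_le hN hp h' h e1.le
    exact fun i hi1 hiN => le_antisymm (B i hi1 hiN) (A i hi1 hiN)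
  · have A := stat_le hN hp h' h h1
    have e1 : s 1 = s' 1 := le_antisymm (A 1 le_rfl hN) h1
    have B := stat_le hN hp h h' e1.le
    exact fun i hi1 hiN => le_antisymm (A i hi1 hiN) (B i hi1 hiN)

lemma S_contOn (N : ℕ) (hN : 1 ≤ N)
    (S : ((ℕ → ℝ) × (ℕ → ℝ)) → ℕ → ℝ)
    (hS : ∀ ap ∈ Pset N, IsStationaryTuple N ap.1 ap.2 (S ap)) :
    ∀ i, 1 ≤ i → i ≤ N → ContinuousOn (fun ap => S ap i) (Pset N) := by
  have hV : ∀ ap₀ ∈ Pset N,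
      Tendsto (fun ap (k : Fin N) => S ap (k.1 + 1)) (𝓝[Pset N] ap₀)
        (𝓝 (fun k : Fin N => S ap₀ (k.1 + 1))) := by
    intro ap₀ h₀
    obtain ⟨ha1pos, haInc, hppos⟩ := id h₀
    set Q₀ : ℝ := ∑ j ∈ Finset.Icc 1 N, ap₀.2 j with hQ₀def
    have hQ₀ : 0 < Q₀ := Finset.sum_pos
      (fun j hj => hppos j (Finset.mem_Icc.mp hj).1 (Finset.mem_Icc.mp hj).2)
      ⟨1, Finset.mem_Icc.mpr ⟨le_rfl, hN⟩⟩
    have hp1pos : 0 < ap₀.2 1 := hppos 1 le_rfl hN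
    have haNpos : 0 < ap₀.1 N := lt_of_lt_of_le ha1pos (chain_mono haInc 1 N le_rfl hN le_rfl)
    set lo : ℝ := ap₀.1 1 / (2 * (Q₀ + 1)) with hlodef
    set hi : ℝ := 2 * (ap₀.1 N + 1) / ap₀.2 1 with hhidef
    have hlo : 0 < lo := div_pos ha1pos (by nlinarith)
    have hhi : 0 < hi := div_pos (by nlinarith) hp1pos
    -- eventual bounds
    have hQcont : Tendsto (fun ap : (ℕ → ℝ) × (ℕ → ℝ) => ∑ j ∈ Finset.Icc 1 N, ap.2 j)
        (𝓝[Pset N] ap₀) (𝓝 Q₀) :=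
      ((continuous_finset_sum _ fun j _ => (continuous_apply j).comp continuous_snd).tendsto
        ap₀).mono_left nhdsWithin_le_nhds
    have ha1cont : Tendsto (fun ap : (ℕ → ℝ) × (ℕ → ℝ) => ap.1 1) (𝓝[Pset N] ap₀)
        (𝓝 (ap₀.1 1)) :=
      (((continuous_apply 1).comp continuous_fst).tendsto ap₀).mono_left nhdsWithin_le_nhds
    have haNcont : Tendsto (fun ap : (ℕ → ℝ) × (ℕ → ℝ) => ap.1 N) (𝓝[Pset N] ap₀)
        (𝓝 (ap₀.1 N)) :=
      (((continuous_apply N).comp continuous_fst).tendsto ap₀).mono_left nhdsWithin_le_nhds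
    have hp1cont : Tendsto (fun ap : (ℕ → ℝ) × (ℕ → ℝ) => ap.2 1) (𝓝[Pset N] ap₀)
        (𝓝 (ap₀.2 1)) :=
      (((continuous_apply 1).comp continuous_snd).tendsto ap₀).mono_left nhdsWithin_le_nhds
    have hbox : ∀ᶠ ap in 𝓝[Pset N] ap₀, ∀ j, 1 ≤ j → j ≤ N → S ap j ∈ Set.Icc lo hi := by
      filter_upwards [hQcont.eventually_lt_const (lt_add_one Q₀),
        ha1cont.eventually_const_lt (half_lt_self ha1pos),
        haNcont.eventually_lt_const (lt_add_one (ap₀.1 N)),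
        hp1cont.eventually_const_lt (half_lt_self hp1pos),
        eventually_mem_nhdsWithin] with ap hQ ha1 haN hp1 hap
      intro j hj1 hjN
      obtain ⟨hA1, hAinc, hPpos⟩ := id hap
      have hst := hS ap hap
      have hPnn : ∀ j, 1 ≤ j → j ≤ N → (0:ℝ) ≤ ap.2 j := fun j a b => (hPpos j a b).le
      have hQpos : 0 < ∑ j ∈ Finset.Icc 1 N, ap.2 j := Finset.sum_pos
        (fun j hj => hPpos j (Finset.mem_Icc.mp hj).1 (Finset.mem_Icc.mp hj).2)
        ⟨1, Finset.mem_Icc.mpr ⟨le_rfl, hN⟩⟩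
      constructor
      · -- lo ≤ S ap j
        have l1 := stat_lower hN hPnn hst
        have l2 : S ap 1 ≤ S ap j := chain_mono hst.2.1 1 j le_rfl hj1 hjN
        have l3 : lo * (2 * (Q₀ + 1)) = ap₀.1 1 := div_mul_cancel₀ _ (by nlinarith)
        have key : (∑ j ∈ Finset.Icc 1 N, ap.2 j) * lo <
            (∑ j ∈ Finset.Icc 1 N, ap.2 j) * S ap j := by
          nlinarith [mul_le_mul_of_nonneg_left hQ.le hlo.le,
            mul_le_mul_of_nonneg_left l2 hQpos.le]
        exact ((mul_lt_mul_iff_right₀ hQpos).mp key).le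
      · -- S ap j ≤ hi
        have u1 := stat_upper hN hPnn hst j hj1 hjN
        have u2 : ap.1 j ≤ ap.1 N := chain_mono hAinc j N hj1 hjN le_rfl
        have u3 : hi * ap₀.2 1 = 2 * (ap₀.1 N + 1) := div_mul_cancel₀ _ hp1pos.ne'
        by_contra hc
        push_neg at hc
        have hp1' : 0 < ap.2 1 := lt_trans (half_pos hp1pos) hp1
        nlinarith [mul_le_mul_of_nonneg_left hp1.le hhi.le,
          mul_lt_mul_of_pos_left hc hp1']
    -- main subsequence argument
    apply tendsto_of_subseq_tendsto
    intro ns hns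
    have hboxn : ∀ᶠ n in atTop, ∀ j, 1 ≤ j → j ≤ N → S (ns n) j ∈ Set.Icc lo hi :=
      hns.eventually hbox
    have hfreq : ∃ᶠ n in atTop,
        (fun k : Fin N => S (ns n) (k.1 + 1)) ∈
          Set.Icc (fun _ : Fin N => lo) (fun _ : Fin N => hi) := by
      apply Eventually.frequently
      filter_upwards [hboxn] with n hn
      rw [Set.mem_Icc]
      constructor <;> intro k
      · exact (hn (k.1 + 1) (by omega) (by omega)).1
      · exact (hn (k.1 + 1) (by omega) (by omega)).2
    obtain ⟨sstar, hsK, φ, hφ, hlim⟩ := (isCompact_Icc (a := fun _ : Fin N => lo)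
      (b := fun _ : Fin N => hi)).tendsto_subseq' hfreq
    refine ⟨φ, ?_⟩
    set w : ℕ → (ℕ → ℝ) × (ℕ → ℝ) := fun n => ns (φ n) with hwdef
    have hwt : Tendsto w atTop (𝓝[Pset N] ap₀) := hns.comp hφ.tendsto_atTop
    have hwmem : ∀ᶠ n in atTop, w n ∈ Pset N := hwt.eventually_mem self_mem_nhdsWithin
    have hSlim : ∀ k : Fin N, Tendsto (fun n => S (w n) (k.1 + 1)) atTop (𝓝 (sstar k)) :=
      fun k => tendsto_pi_nhds.mp hlim k
    have hacoord : ∀ j, Tendsto (fun n => (w n).1 j) atTop (𝓝 (ap₀.1 j)) := fun j =>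
      (((continuous_apply j).comp continuous_fst).tendsto ap₀).comp
        (hwt.mono_right nhdsWithin_le_nhds)
    have hpcoord : ∀ j, Tendsto (fun n => (w n).2 j) atTop (𝓝 (ap₀.2 j)) := fun j =>
      (((continuous_apply j).comp continuous_snd).tendsto ap₀).comp
        (hwt.mono_right nhdsWithin_le_nhds)
    set sh : ℕ → ℝ := fun j => if h : 1 ≤ j ∧ j ≤ N then sstar ⟨j - 1, by omega⟩ else 1
      with hshdef
    have hshlim : ∀ j, 1 ≤ j → j ≤ N → Tendsto (fun n => S (w n) j) atTop (𝓝 (sh j)) := by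
      intro j h1 h2
      have hj : sh j = sstar ⟨j - 1, by omega⟩ := dif_pos ⟨h1, h2⟩
      rw [hj]
      have := hSlim ⟨j - 1, by omega⟩
      simpa [Nat.sub_add_cancel h1] using this
    have hQw : Tendsto (fun n => ∑ j ∈ Finset.Icc 1 N, (w n).2 j) atTop (𝓝 Q₀) :=
      tendsto_finset_sum _ (fun j _ => hpcoord j)
    have hboxw : ∀ᶠ n in atTop, ∀ j, 1 ≤ j → j ≤ N → S (w n) j ∈ Set.Icc lo hi :=
      hwt.eventually hbox
    have hstat : IsStationaryTuple N ap₀.1 ap₀.2 sh := by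
      refine ⟨?_, ?_, ?_⟩
      · have hge : lo ≤ sh 1 := ge_of_tendsto (hshlim 1 le_rfl hN)
          (by filter_upwards [hboxw] with n hn using (hn 1 le_rfl hN).1)
        exact lt_of_lt_of_le hlo hge
      · intro i h1 hiN
        have key : ap₀.1 (i + 1) - ap₀.1 i ≤ Q₀ * (sh (i + 1) - sh i) := by
          apply le_of_tendsto_of_tendsto ((hacoord (i + 1)).sub (hacoord i))
            (hQw.mul ((hshlim (i + 1) (by omega) hiN).sub (hshlim i h1 hiN.le)))
          filter_upwards [hwmem] with n hn
          have hpar : IsParam N (w n).1 (w n).2 := hn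
          exact stat_gap (fun j a b => (hpar.2.2 j a b).le) (hS (w n) hn) i h1 hiN
        have hstep := haInc i h1 hiN
        nlinarith
      · intro i h1 hiN
        have h3 : Tendsto (fun n => ∑ j ∈ Finset.Icc 1 N,
              (w n).2 j * pos' (S (w n) i - S (w n) j + S (w n) 1)) atTop
            (𝓝 (∑ j ∈ Finset.Icc 1 N, ap₀.2 j * pos' (sh i - sh j + sh 1))) := by
          apply tendsto_finset_sum
          intro j hj
          obtain ⟨hj1, hjN⟩ := Finset.mem_Icc.mp hj
          exact (hpcoord j).mul ((continuous_pos'.tendsto _).comp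
            (((hshlim i h1 hiN).sub (hshlim j hj1 hjN)).add (hshlim 1 le_rfl hN)))
        have h4 : (fun n => (w n).1 i) =ᶠ[atTop] (fun n => ∑ j ∈ Finset.Icc 1 N,
            (w n).2 j * pos' (S (w n) i - S (w n) j + S (w n) 1)) := by
          filter_upwards [hwmem] with n hn using (hS (w n) hn).2.2 i h1 hiN
        exact tendsto_nhds_unique ((hacoord i).congr' h4) h3
    have huniq := stat_unique hN hppos hstat (hS ap₀ h₀)
    have hstar : sstar = fun k : Fin N => S ap₀ (k.1 + 1) := by
      funext k
      have h1 := huniq (k.1 + 1) (by omega) (by omega)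
      have h2 : sh (k.1 + 1) = sstar ⟨k.1 + 1 - 1, by omega⟩ :=
        dif_pos ⟨by omega, by omega⟩
      have h3 : (⟨k.1 + 1 - 1, by omega⟩ : Fin N) = k := by
        apply Fin.ext; simp
      rw [h2, h3] at h1
      exact h1
    rw [← hstar]
    exact hlim
  intro i h1 hiN
  intro ap₀ h₀
  have hik : i - 1 + 1 = i := Nat.sub_add_cancel h1
  have h2 : Tendsto (fun ap => S ap ((⟨i - 1, by omega⟩ : Fin N).1 + 1)) (𝓝[Pset N] ap₀)
      (𝓝 (S ap₀ ((⟨i - 1, by omega⟩ : Fin N).1 + 1))) :=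
    ((continuous_apply (⟨i - 1, by omega⟩ : Fin N)).tendsto _).comp (hV ap₀ h₀)
  have h3 : Tendsto (fun ap => S ap i) (𝓝[Pset N] ap₀) (𝓝 (S ap₀ i)) := by simpa [hik] using h2
  exact h3

end Helpers

/-- continuity of the stationary tuple in the parameters,
Proposition 4.7. -/
theorem stmt_17 (N : ℕ) (hN : 1 ≤ N)
    (S : ((ℕ → ℝ) × (ℕ → ℝ)) → ℕ → ℝ)
    (hS : ∀ ap ∈ Pset N, IsStationaryTuple N ap.1 ap.2 (S ap)) :
    ∀ i, 1 ≤ i → i ≤ N →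
      ContinuousOn (fun ap => S ap i) (Pset N) ∧
      ContinuousOn (fun ap => S ap i - (if i = 1 then 0 else S ap (i - 1))) (Pset N) := by
  intro i h1 hiN
  refine ⟨S_contOn N hN S hS i h1 hiN, ?_⟩
  by_cases hi : i = 1
  · subst hi
    simp only [if_pos rfl]
    exact (S_contOn N hN S hS 1 le_rfl hN).sub continuousOn_const
  · simp only [if_neg hi]
    exact (S_contOn N hN S hS i h1 hiN).sub
      (S_contOn N hN S hS (i - 1) (by omega) (by omega))
end
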